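/- arXiv:2101.10501 — 5 statements merged into one kernel-verified Lean document; each statement's English description precedes it below -/
import Mathlib

section
/- Every singular point of the Cefalù quartic F(z) = (∑zᵢ²)² - 3∑zᵢ⁴ = 0 (over an algebraically closed field of characteristic ≠ 2,3) has at least one coordinate equal to zero; i.e., if all four partial derivatives of F vanish at a point with all coordinates nonzero, one obtains a contradiction. -/
open MvPolynomial

/-- Every singular point of the Cefalù quartic
`F = (∑ zᵢ²)² - 3 ∑ zᵢ⁴` (over an algebraically closed field of characteristic ≠ 2,3)
has at least one coordinate equal to zero: if `F` and all four of its partial derivatives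
vanish at a point all of whose coordinates are nonzero, we get a contradiction. -/
theorem cefalu_singular_points_have_zero_coordinate
    (K : Type*) [Field K] [IsAlgClosed K] (h2 : (2 : K) ≠ 0) (h3 : (3 : K) ≠ 0)
    (F : MvPolynomial (Fin 4) K)
    (hF : F = (∑ i, (X i) ^ 2) ^ 2 - C 3 * ∑ i, (X i) ^ 4)
    (z : Fin 4 → K) (hz : ∀ i, z i ≠ 0)
    (hFz : eval z F = 0) (hsing : ∀ i, eval z (pderiv i F) = 0) :
    False := by
  subst hF
  -- From the vanishing of the i-th partial derivative, since `z i ≠ 0` and `2 ≠ 0`,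
  -- we obtain `∑ j, (z j)² = 3 (z i)²`.
  have key : ∀ i, (∑ j, (z j) ^ 2) = 3 * (z i) ^ 2 := by
    intro i
    have h := hsing i
    simp [map_sub, map_sum, pderiv_pow, pderiv_X, pderiv_C_mul, Pi.single_apply,
      Finset.mul_sum, Finset.sum_ite_eq'] at h
    have h4 : (2 : K) * 2 ≠ 0 := mul_ne_zero h2 h2
    have hmul : (2 * 2 * z i) * (∑ j, (z j) ^ 2) = (2 * 2 * z i) * (3 * (z i) ^ 2) := by
      linear_combination h
    exact mul_left_cancel₀ (mul_ne_zero h4 (hz i)) hmul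
  have h0 := key 0
  have h1 := key 1
  have h2' := key 2
  have h3' := key 3
  rw [Fin.sum_univ_four] at h0 h1 h2' h3'
  -- Summing the four equations gives `4S = 3S`, so `S = 0`, hence `3 (z 0)² = 0`.
  have hsq : (3 : K) * (z 0) ^ 2 = 0 := by linear_combination h1 + h2' + h3'
  have : (z 0) ^ 2 = 0 := by
    rcases mul_eq_zero.mp hsq with h | h
    · exact absurd h h3
    · exact h
  exact hz 0 (pow_eq_zero_iff (by norm_num) |>.mp this)
end

section
/- Let φ be an endomorphism of a free abelian group sending H ↦ 3H - 4E₂, E₁ ↦ 2H - 3E₂, E₂ ↦ E₁ on a rank-3 free summand with basis H, E₁, E₂ (and identity elsewhere). Then φ has infinite order. -/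
/-- Let `φ` be an endomorphism of a free abelian group `(Fin 3 → ℤ) × A` which on the rank-3
free summand with basis `H = e₀`, `E₁ = e₁`, `E₂ = e₂` sends `H ↦ 3H - 4E₂`,
`E₁ ↦ 2H - 3E₂`, `E₂ ↦ E₁`, and is the identity elsewhere. Then `φ` has infinite order. -/
theorem picard_action_infinite_order
    (A : Type*) [AddCommGroup A]
    (φ : AddMonoid.End ((Fin 3 → ℤ) × A))
    (hφ : ∀ (v : Fin 3 → ℤ) (a : A),
      φ (v, a) = (![3 * v 0 + 2 * v 1, v 2, -4 * v 0 - 3 * v 1], a)) :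
    ∀ n : ℕ, 1 ≤ n → φ ^ n ≠ 1 := by
  have key : ∀ n : ℕ, (φ ^ n) (![1, 0, 0], (0 : A)) =
      (![1 + 2 * (n : ℤ) ^ 2, 2 * n - 2 * (n : ℤ) ^ 2, -2 * (n : ℤ) ^ 2 - 2 * n], 0) := by
    intro n
    induction n with
    | zero => simp
    | succ n ih =>
      rw [pow_succ']
      have : (φ * φ ^ n) (![1, 0, 0], (0 : A)) = φ ((φ ^ n) (![1, 0, 0], (0 : A))) := rfl
      rw [this, ih, hφ]
      refine Prod.ext ?_ rfl
      funext i
      fin_cases i <;> simp <;> push_cast <;> ring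
  intro n hn h
  have := key n
  rw [h] at this
  have := congrArg (fun p => p.1 0) this
  simp at this
  have : (n : ℤ) = 0 := by nlinarith [sq_nonneg (n : ℤ)]
  omega
end

section
/- A normal cubic surface in ℙ³ over an algebraically closed field cannot contain three collinear singular points: if F is an irreducible cubic form in 4 variables whose zero set has finite singular locus, then no line contains three singular points of {F = 0}. -/
open MvPolynomial

section NCAuxSection

open Polynomial

namespace NCAux

variable {K : Type*} [Field K]

/-- Parametrization of the line through `p` and `q`. -/
noncomputable def lmap (p q : Fin 4 → K) : Fin 4 → Polynomial K :=
  fun i => Polynomial.C (p i) + Polynomial.X * Polynomial.C (q i)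

lemma eval_lmap (G : MvPolynomial (Fin 4) K) (p q : Fin 4 → K) (t : K) :
    Polynomial.eval t (MvPolynomial.aeval (lmap p q) G)
      = MvPolynomial.eval (fun i => p i + t * q i) G := by
  induction G using MvPolynomial.induction_on with
  | C a => simp [MvPolynomial.algebraMap_eq]
  | add f g hf hg => simp [map_add, hf, hg]
  | mul_X f i hf => rw [map_mul, Polynomial.eval_mul, hf, MvPolynomial.aeval_X, MvPolynomial.eval_mul, MvPolynomial.eval_X]; simp only [lmap, Polynomial.eval_add, Polynomial.eval_mul, Polynomial.eval_C, Polynomial.eval_X]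

lemma degree_eq_of_mem_support {G : MvPolynomial (Fin 4) K} {n : ℕ}
    (hG : G.IsHomogeneous n) {d : Fin 4 →₀ ℕ} (hd : d ∈ G.support) : d.degree = n := by
  by_contra h
  exact (MvPolynomial.mem_support_iff.mp hd) (hG.coeff_eq_zero h)

lemma natDegree_lmap_le (p q : Fin 4 → K) {G : MvPolynomial (Fin 4) K} {n : ℕ}
    (hG : G.IsHomogeneous n) :
    (MvPolynomial.aeval (lmap p q) G).natDegree ≤ n := by
  conv_lhs => rw [G.as_sum]
  rw [map_sum]
  apply Polynomial.natDegree_sum_le_of_forall_le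
  intro d hd
  rw [MvPolynomial.aeval_monomial]
  refine Polynomial.natDegree_mul_le.trans ?_
  have h1 : (algebraMap K (Polynomial K) (MvPolynomial.coeff d G)).natDegree = 0 :=
    Polynomial.natDegree_C _
  rw [h1, zero_add]
  rw [Finsupp.prod]
  refine (Polynomial.natDegree_prod_le _ _).trans ?_
  have : ∀ i ∈ d.support, ((lmap p q i) ^ d i).natDegree ≤ d i := by
    intro i _
    refine (Polynomial.natDegree_pow_le).trans ?_
    have : (lmap p q i).natDegree ≤ 1 := by
      refine (Polynomial.natDegree_add_le _ _).trans ?_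
      simp [Polynomial.natDegree_C_mul_le, lmap]
      exact (Polynomial.natDegree_mul_le).trans (by simp)
    calc d i * (lmap p q i).natDegree ≤ d i * 1 := Nat.mul_le_mul_left _ this
      _ = d i := mul_one _
  refine (Finset.sum_le_sum this).trans ?_
  rw [← Finsupp.degree_apply, degree_eq_of_mem_support hG hd]

lemma eval_smul_of_isHomogeneous {G : MvPolynomial (Fin 4) K} {n : ℕ}
    (hG : G.IsHomogeneous n) (c : K) (v : Fin 4 → K) :
    MvPolynomial.eval (c • v) G = c ^ n * MvPolynomial.eval v G := by
  conv_lhs => rw [G.as_sum]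
  conv_rhs => rw [G.as_sum]
  rw [map_sum, map_sum, Finset.mul_sum]
  apply Finset.sum_congr rfl
  intro d hd
  rw [MvPolynomial.eval_monomial, MvPolynomial.eval_monomial]
  rw [Finsupp.prod, Finsupp.prod]
  have : ∏ i ∈ d.support, (c • v) i ^ d i
      = c ^ n * ∏ i ∈ d.support, v i ^ d i := by
    simp only [Pi.smul_apply, smul_eq_mul, mul_pow]
    rw [Finset.prod_mul_distrib, Finset.prod_pow_eq_pow_sum]
    rw [← Finsupp.degree_apply, degree_eq_of_mem_support hG hd]
  rw [this]; ring

lemma isHomogeneous_pderiv {G : MvPolynomial (Fin 4) K} {n : ℕ}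
    (hG : G.IsHomogeneous (n + 1)) (i : Fin 4) :
    (MvPolynomial.pderiv i G).IsHomogeneous n := by
  conv_lhs => rw [G.as_sum]
  rw [map_sum]
  apply MvPolynomial.IsHomogeneous.sum
  intro d hd
  rw [MvPolynomial.pderiv_monomial]
  by_cases h : d i = 0
  · rw [h, Nat.cast_zero, mul_zero, MvPolynomial.monomial_zero]
    exact MvPolynomial.isHomogeneous_zero _ _ _
  · apply MvPolynomial.isHomogeneous_monomial
    have hsub : (d - Finsupp.single i 1) + Finsupp.single i 1 = d := by
      ext j
      by_cases hji : j = i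
      · subst hji; simp; omega
      · simp [Finsupp.single_apply, Ne.symm hji]
    have hdeg : d.degree = n + 1 := degree_eq_of_mem_support hG hd
    have h1 : (Finsupp.single i 1 : Fin 4 →₀ ℕ).degree = 1 := by
      simp [Finsupp.degree_apply, Finsupp.support_single_ne_zero]
    have h2 : (d - Finsupp.single i 1).degree + (Finsupp.single i 1 : Fin 4 →₀ ℕ).degree
        = d.degree := by
      conv_rhs => rw [← hsub]
      simp [Finsupp.degree_eq_weight_one, map_add]
    omega


lemma lmap_reflect [Infinite K] {G : MvPolynomial (Fin 4) K} {n : ℕ} (hG : G.IsHomogeneous n)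
    (p q : Fin 4 → K) :
    MvPolynomial.aeval (lmap p q) G
      = ∑ k ∈ Finset.range (n + 1),
          Polynomial.C ((MvPolynomial.aeval (lmap q p) G).coeff k) * Polynomial.X ^ (n - k) := by
  apply Polynomial.eq_of_infinite_eval_eq
  have hinf : ({(0 : K)}ᶜ : Set K).Infinite := (Set.finite_singleton 0).infinite_compl
  refine hinf.mono ?_
  intro t ht
  have ht0 : t ≠ 0 := ht
  simp only [Set.mem_setOf_eq]
  have h1 : Polynomial.eval t (MvPolynomial.aeval (lmap p q) G)
      = MvPolynomial.eval (fun i => p i + t * q i) G := eval_lmap _ _ _ _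
  have heq : (fun i => p i + t * q i) = t • (fun i => q i + t⁻¹ * p i) := by
    funext i
    simp only [Pi.smul_apply, smul_eq_mul]
    field_simp
    ring
  have h2 : MvPolynomial.eval (fun i => p i + t * q i) G
      = t ^ n * MvPolynomial.eval (fun i => q i + t⁻¹ * p i) G := by
    rw [heq, eval_smul_of_isHomogeneous hG]
  have h3 : MvPolynomial.eval (fun i => q i + t⁻¹ * p i) G
      = Polynomial.eval t⁻¹ (MvPolynomial.aeval (lmap q p) G) := (eval_lmap _ _ _ _).symm
  have h4 : Polynomial.eval t⁻¹ (MvPolynomial.aeval (lmap q p) G)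
      = ∑ k ∈ Finset.range (n + 1), (MvPolynomial.aeval (lmap q p) G).coeff k * t⁻¹ ^ k :=
    Polynomial.eval_eq_sum_range' (lt_of_le_of_lt (natDegree_lmap_le q p hG) (Nat.lt_succ_self n)) _
  rw [h1, h2, h3, h4, Finset.mul_sum, Polynomial.eval_finset_sum]
  apply Finset.sum_congr rfl
  intro k hk
  have hk' : k ≤ n := Nat.lt_succ_iff.mp (Finset.mem_range.mp hk)
  simp only [Polynomial.eval_mul, Polynomial.eval_C, Polynomial.eval_pow, Polynomial.eval_X]
  have hpow : t ^ n = t ^ (n - k) * t ^ k := by rw [← pow_add]; congr 1; omega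
  rw [hpow]
  field_simp
  rw [mul_comm (t ^ k), mul_assoc, ← mul_pow, mul_one_div_cancel ht0, one_pow, mul_one]

lemma derivative_aeval_lmap (p q : Fin 4 → K) (G : MvPolynomial (Fin 4) K) :
    Polynomial.derivative (MvPolynomial.aeval (lmap p q) G)
      = ∑ i, MvPolynomial.aeval (lmap p q) (MvPolynomial.pderiv i G) * Polynomial.C (q i) := by
  induction G using MvPolynomial.induction_on with
  | C a => simp [MvPolynomial.algebraMap_eq]
  | add f g hf hg => simp only [map_add, hf, hg, add_mul, Finset.sum_add_distrib]
  | mul_X f j hf =>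
    rw [map_mul, Polynomial.derivative_mul, hf, MvPolynomial.aeval_X]
    have hder : Polynomial.derivative (lmap p q j) = Polynomial.C (q j) := by
      simp [lmap]
    rw [hder]
    have hpd : ∀ i : Fin 4, MvPolynomial.pderiv i (f * MvPolynomial.X j)
        = MvPolynomial.pderiv i f * MvPolynomial.X j + if j = i then f else 0 := by
      intro i
      rw [MvPolynomial.pderiv_mul]
      by_cases h : j = i
      · subst h
        simp
      · simp [MvPolynomial.pderiv_X_of_ne (Ne.symm h), h]
    simp only [hpd, map_add, map_mul, MvPolynomial.aeval_X, add_mul, Finset.sum_add_distrib]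
    rw [Finset.sum_mul]
    refine congrArg₂ (· + ·) ?_ ?_
    · apply Finset.sum_congr rfl
      intro i _
      ring
    · simp only [apply_ite (MvPolynomial.aeval (lmap p q)), map_zero, ite_mul, zero_mul,
        Finset.sum_ite_eq, Finset.mem_univ, if_true]


lemma eval_fun_zero (G : MvPolynomial (Fin 4) K) (p q : Fin 4 → K) :
    MvPolynomial.eval (fun i => p i + (0 : K) * q i) G = MvPolynomial.eval p G := by
  have h : (fun i => p i + (0 : K) * q i) = p := by
    funext i
    ring
  rw [h]

lemma key_quad [Infinite K] {G : MvPolynomial (Fin 4) K} (hG : G.IsHomogeneous 2)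
    (p q : Fin 4 → K) (hp : MvPolynomial.eval p G = 0) (hq : MvPolynomial.eval q G = 0)
    {u : K} (hu : u ≠ 0) (hr : MvPolynomial.eval (fun i => p i + u * q i) G = 0) :
    MvPolynomial.aeval (lmap p q) G = 0 := by
  set g := MvPolynomial.aeval (lmap p q) G with hgdef
  set h := MvPolynomial.aeval (lmap q p) G with hhdef
  have hre : g = Polynomial.C (h.coeff 0) * Polynomial.X ^ 2
      + Polynomial.C (h.coeff 1) * Polynomial.X + Polynomial.C (h.coeff 2) := by
    rw [hgdef, lmap_reflect hG p q, ← hhdef]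
    rw [Finset.sum_range_succ, Finset.sum_range_succ, Finset.sum_range_succ,
      Finset.sum_range_zero]
    norm_num
  have h0 : h.coeff 0 = 0 := by
    rw [Polynomial.coeff_zero_eq_eval_zero, hhdef, eval_lmap, eval_fun_zero, hq]
  have h2 : h.coeff 2 = 0 := by
    have e1 : g.eval 0 = 0 := by rw [hgdef, eval_lmap, eval_fun_zero, hp]
    rw [hre] at e1
    simpa using e1
  have h1 : h.coeff 1 = 0 := by
    have e1 : g.eval u = 0 := by rw [hgdef, eval_lmap, hr]
    rw [hre] at e1
    simp only [h0, h2, Polynomial.eval_add, Polynomial.eval_mul, Polynomial.eval_pow,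
      Polynomial.eval_C, Polynomial.eval_X, map_zero, zero_mul, add_zero, zero_add] at e1
    exact (mul_eq_zero.mp e1).resolve_right hu
  rw [hre, h0, h1, h2]
  simp

lemma key_cubic [Infinite K] {F : MvPolynomial (Fin 4) K} (hF : F.IsHomogeneous 3)
    (p q : Fin 4 → K) (hp : MvPolynomial.eval p F = 0) (hq : MvPolynomial.eval q F = 0)
    {u : K} (hu : u ≠ 0) (hr : MvPolynomial.eval (fun i => p i + u * q i) F = 0)
    (hder : ∀ i, MvPolynomial.aeval (lmap p q) (MvPolynomial.pderiv i F) = 0) :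
    MvPolynomial.aeval (lmap p q) F = 0 := by
  set g := MvPolynomial.aeval (lmap p q) F with hgdef
  set h := MvPolynomial.aeval (lmap q p) F with hhdef
  have hre : g = Polynomial.C (h.coeff 0) * Polynomial.X ^ 3
      + Polynomial.C (h.coeff 1) * Polynomial.X ^ 2
      + Polynomial.C (h.coeff 2) * Polynomial.X + Polynomial.C (h.coeff 3) := by
    rw [hgdef, lmap_reflect hF p q, ← hhdef]
    rw [Finset.sum_range_succ, Finset.sum_range_succ, Finset.sum_range_succ,
      Finset.sum_range_succ, Finset.sum_range_zero]
    norm_num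
  have h0 : h.coeff 0 = 0 := by
    rw [Polynomial.coeff_zero_eq_eval_zero, hhdef, eval_lmap, eval_fun_zero, hq]
  have h3 : h.coeff 3 = 0 := by
    have e1 : g.eval 0 = 0 := by rw [hgdef, eval_lmap, eval_fun_zero, hp]
    rw [hre] at e1
    simpa using e1
  have hderg : Polynomial.derivative g = 0 := by
    rw [hgdef, derivative_aeval_lmap]
    simp [hder]
  have h2 : h.coeff 2 = 0 := by
    have e1 : g.coeff 1 = 0 := by
      have := Polynomial.coeff_derivative g 0
      rw [hderg] at this
      simpa using this.symm
    rw [hre] at e1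
    simpa using e1
  have h1 : h.coeff 1 = 0 := by
    have e1 : g.eval u = 0 := by rw [hgdef, eval_lmap, hr]
    rw [hre] at e1
    simp only [h0, h2, h3, Polynomial.eval_add, Polynomial.eval_mul, Polynomial.eval_pow,
      Polynomial.eval_C, Polynomial.eval_X, map_zero, zero_mul, add_zero, zero_add] at e1
    have := mul_eq_zero.mp e1
    rcases this with h | h
    · exact h
    · exact absurd (pow_eq_zero_iff (by norm_num) |>.mp h) hu
  rw [hre, h0, h1, h2, h3]
  simp

end NCAux

end NCAuxSection

/-- A normal cubic surface in `ℙ³` over an algebraically closed field cannot contain three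
collinear singular points. Here `F` is an irreducible homogeneous cubic form in 4 variables;
normality is expressed by the finiteness of the set of singular points of `{F = 0}` up to
scalars; and we show that no three distinct singular points of `{F = 0}` are collinear. -/
theorem normal_cubic_no_three_collinear_singular_points
    (K : Type*) [Field K] [IsAlgClosed K]
    (F : MvPolynomial (Fin 4) K) (hhom : F.IsHomogeneous 3) (hirr : Irreducible F)
    -- the singular locus is finite (as a set of points of ℙ³):
    (hnormal : ∃ S : Finset (Fin 4 → K),
      ∀ v : Fin 4 → K, v ≠ 0 → eval v F = 0 → (∀ i, eval v (pderiv i F) = 0) →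
        ∃ w ∈ S, ∃ c : K, v = c • w)
    -- three singular points:
    (p q r : Fin 4 → K) (hp0 : p ≠ 0) (hq0 : q ≠ 0) (hr0 : r ≠ 0)
    (hp : eval p F = 0 ∧ ∀ i, eval p (pderiv i F) = 0)
    (hq : eval q F = 0 ∧ ∀ i, eval q (pderiv i F) = 0)
    (hr : eval r F = 0 ∧ ∀ i, eval r (pderiv i F) = 0)
    -- pairwise distinct as points of ℙ³:
    (hpq : ¬ ∃ c : K, q = c • p) (hpr : ¬ ∃ c : K, r = c • p) (hqr : ¬ ∃ c : K, r = c • q)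
    -- collinear:
    (hcol : ∃ a b : K, r = a • p + b • q) :
    False := by
  obtain ⟨hpF, hpD⟩ := hp
  obtain ⟨hqF, hqD⟩ := hq
  obtain ⟨hrF, hrD⟩ := hr
  obtain ⟨S, hS⟩ := hnormal
  obtain ⟨a, b, hab⟩ := hcol
  have ha : a ≠ 0 := by
    rintro rfl
    exact hqr ⟨b, by simpa using hab⟩
  have hb : b ≠ 0 := by
    rintro rfl
    exact hpr ⟨a, by simpa using hab⟩
  set u := b / a with hu
  have hu0 : u ≠ 0 := div_ne_zero hb ha
  have hruw : r = a • (fun i => p i + u * q i) := by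
    funext i
    rw [hab]
    simp only [Pi.add_apply, Pi.smul_apply, smul_eq_mul, hu]
    field_simp
  have hFu : MvPolynomial.eval (fun i => p i + u * q i) F = 0 := by
    have h := hrF
    rw [hruw, NCAux.eval_smul_of_isHomogeneous hhom] at h
    exact (mul_eq_zero.mp h).resolve_left (pow_ne_zero _ ha)
  have hDhom : ∀ i, (pderiv i F).IsHomogeneous 2 := fun i => NCAux.isHomogeneous_pderiv hhom i
  have hDu : ∀ i, MvPolynomial.eval (fun j => p j + u * q j) (pderiv i F) = 0 := by
    intro i
    have h := hrD i
    rw [hruw, NCAux.eval_smul_of_isHomogeneous (hDhom i)] at h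
    exact (mul_eq_zero.mp h).resolve_left (pow_ne_zero _ ha)
  have hgD : ∀ i, MvPolynomial.aeval (NCAux.lmap p q) (pderiv i F) = 0 := fun i =>
    NCAux.key_quad (hDhom i) p q (hpD i) (hqD i) hu0 (hDu i)
  have hgF : MvPolynomial.aeval (NCAux.lmap p q) F = 0 :=
    NCAux.key_cubic hhom p q hpF hqF hu0 hFu hgD
  have hlineF : ∀ t : K, eval (fun j => p j + t * q j) F = 0 := by
    intro t
    rw [← NCAux.eval_lmap, hgF, Polynomial.eval_zero]
  have hlineD : ∀ (t : K) (i : Fin 4), eval (fun j => p j + t * q j) (pderiv i F) = 0 := by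
    intro t i
    rw [← NCAux.eval_lmap, hgD i, Polynomial.eval_zero]
  have hne : ∀ t : K, (fun j => p j + t * q j) ≠ 0 := by
    intro t h
    by_cases ht : t = 0
    · apply hp0
      funext j
      have := congrFun h j
      simpa [ht] using this
    · apply hpq
      refine ⟨-t⁻¹, funext fun j => ?_⟩
      have hj := congrFun h j
      simp only [Pi.zero_apply] at hj
      simp only [Pi.smul_apply, smul_eq_mul]
      field_simp
      linear_combination hj
  have hch : ∀ t : K, ∃ w : {x // x ∈ S}, ∃ c : K,
      (fun j => p j + t * q j) = c • (w : Fin 4 → K) := by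
    intro t
    obtain ⟨w, hwS, c, hc⟩ := hS _ (hne t) (hlineF t) (hlineD t)
    exact ⟨⟨w, hwS⟩, c, hc⟩
  choose w c hwc using hch
  obtain ⟨t, t', htne, hweq⟩ := Finite.exists_ne_map_eq_of_infinite w
  have hct' : c t' ≠ 0 := by
    intro h
    exact hne t' (by rw [hwc t', h, zero_smul])
  set d := c t / c t' with hd
  have hvv : (fun j => p j + t * q j) = d • (fun j => p j + t' * q j) := by
    rw [hwc t, hwc t', hweq, smul_smul, hd, div_mul_cancel₀ _ hct']
  have hptq : ∀ j, (1 - d) * p j = (d * t' - t) * q j := by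
    intro j
    have hj := congrFun hvv j
    simp only [Pi.smul_apply, smul_eq_mul] at hj
    linear_combination hj
  by_cases hd1 : d = 1
  · obtain ⟨j, hj⟩ := Function.ne_iff.mp hq0
    have h := hptq j
    rw [hd1] at h
    simp only [sub_self, zero_mul, one_mul] at h
    have := (mul_eq_zero.mp h.symm).resolve_right hj
    exact htne (sub_eq_zero.mp this).symm
  · have hd1' : (1 : K) - d ≠ 0 := sub_ne_zero.mpr (Ne.symm hd1)
    have hdt : d * t' - t ≠ 0 := by
      intro h
      apply hp0
      funext j
      have := hptq j
      rw [h, zero_mul] at this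
      simpa [Pi.zero_apply] using (mul_eq_zero.mp this).resolve_left hd1'
    apply hpq
    refine ⟨(1 - d) / (d * t' - t), funext fun j => ?_⟩
    have := hptq j
    simp only [Pi.smul_apply, smul_eq_mul]
    field_simp
    linear_combination -this
end

section
/- A normal cubic surface in ℙ³ over an algebraically closed field has at most 4 singular points. -/
open MvPolynomial

open Finset


section Aux

variable {K : Type*} [Field K]

/-- Linear forms used for substituting a linear change of coordinates. -/
noncomputable def lform {n : ℕ} (q : Fin n → Fin 4 → K) (i : Fin 4) :
    MvPolynomial (Fin n) K := ∑ k, C (q k i) * X k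

lemma eval_lsub {n : ℕ} (q : Fin n → Fin 4 → K) (x : Fin n → K) (F : MvPolynomial (Fin 4) K) :
    eval x (aeval (lform q) F) = eval (fun i => ∑ k, x k * q k i) F := by
  induction F using MvPolynomial.induction_on with
  | C a => simp
  | add p q hp hq => rw [map_add, map_add, hp, hq, map_add]
  | mul_X p i hp =>
      rw [map_mul, aeval_X, map_mul, hp, map_mul, eval_X]
      congr 1
      simp [lform, mul_comm]

lemma pderiv_aeval {m n : ℕ} (f : Fin m → MvPolynomial (Fin n) K) (j : Fin n)
    (F : MvPolynomial (Fin m) K) :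
    pderiv j (aeval f F) = ∑ i, aeval f (pderiv i F) * pderiv j (f i) := by
  induction F using MvPolynomial.induction_on with
  | C a => simp
  | add p q hp hq =>
      rw [map_add, map_add, hp, hq, ← Finset.sum_add_distrib]
      exact Finset.sum_congr rfl fun k _ => by rw [map_add, map_add, add_mul]
  | mul_X p i hp =>
      rw [map_mul, aeval_X, pderiv_mul, hp, Finset.sum_mul]
      have key : ∀ k ∈ Finset.univ, (aeval f) ((pderiv k) (p * X i)) * (pderiv j) (f k)
          = (aeval f) ((pderiv k) p) * (pderiv j) (f k) * f i
            + (if k = i then (aeval f) p * (pderiv j) (f i) else 0) := by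
        intro k _
        rw [pderiv_mul]
        by_cases hik : k = i
        · subst hik
          rw [pderiv_X_self]
          simp only [map_add, map_mul, aeval_X, map_one, mul_one, if_pos rfl]
          ring_nf
          simp only [if_pos trivial]
        · rw [pderiv_X_of_ne fun h => hik h.symm]
          simp only [map_add, map_mul, map_zero, mul_zero, add_zero, if_neg hik, aeval_X]
          ring
      rw [Finset.sum_congr rfl key, Finset.sum_add_distrib, Finset.sum_ite_eq' Finset.univ i]
      simp only [Finset.mem_univ, if_pos]

lemma degree_eq_sum_univ {m : ℕ} (d : Fin m →₀ ℕ) : d.degree = ∑ i, d i :=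
  Finset.sum_subset (Finset.subset_univ _) (fun i _ hi => Finsupp.notMem_support_iff.mp hi)

lemma homog_degree {m n : ℕ} {G : MvPolynomial (Fin m) K} (hG : G.IsHomogeneous n)
    {d : Fin m →₀ ℕ} (hd : coeff d G ≠ 0) : ∑ i, d i = n := by
  have h := hG hd
  rw [show (Finsupp.weight (1 : Fin m → ℕ)) = Finsupp.weight fun _ => 1 from rfl, ← Finsupp.degree_eq_weight_one] at h
  rw [← degree_eq_sum_univ]
  exact h

lemma coeff_pderiv {m : ℕ} (f : MvPolynomial (Fin m) K) (j : Fin m) (d : Fin m →₀ ℕ) :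
    coeff d (pderiv j f) = ((d j : K) + 1) * coeff (d + Finsupp.single j 1) f := by
  induction f using MvPolynomial.induction_on' with
  | monomial s a =>
      rw [pderiv_monomial, coeff_monomial, coeff_monomial]
      by_cases hs : s j = 0
      · have h1 : s - Finsupp.single j 1 = s := by
          ext i
          rcases eq_or_ne j i with rfl | hij
          · simp [hs]
          · simp [Finsupp.single_apply, hij]
        rw [h1]
        have h2 : ¬ s = d + Finsupp.single j 1 := by
          intro h; rw [h] at hs; simp at hs
        rw [if_neg h2]
        by_cases hsd : s = d
        · rw [if_pos hsd, hs]; simp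
        · rw [if_neg hsd, mul_zero]
      · by_cases hsd : s = d + Finsupp.single j 1
        · subst hsd
          have h1 : d + Finsupp.single j 1 - Finsupp.single j 1 = d := by
            ext i
            rw [Finsupp.tsub_apply, Finsupp.add_apply]
            omega
          have h3 : (d + Finsupp.single j 1 : Fin m →₀ ℕ) j = d j + 1 := by simp
          rw [if_pos rfl, h1, if_pos rfl, h3]
          push_cast
          ring
        · rw [if_neg hsd]
          have h2 : ¬ s - Finsupp.single j 1 = d := by
            intro h
            apply hsd
            ext i
            have hi := DFunLike.congr_fun h i
            rw [Finsupp.tsub_apply] at hi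
            rw [Finsupp.add_apply]
            rcases eq_or_ne j i with rfl | hij
            · rw [Finsupp.single_apply, if_pos rfl] at hi
              rw [Finsupp.single_apply, if_pos rfl]
              omega
            · rw [Finsupp.single_apply, if_neg hij] at hi
              rw [Finsupp.single_apply, if_neg hij]
              omega
          rw [if_neg h2, mul_zero]
  | add p q hp hq => rw [map_add, coeff_add, coeff_add, hp, hq, mul_add]

lemma homog_pderiv {m n : ℕ} {G : MvPolynomial (Fin m) K} (hG : G.IsHomogeneous n)
    (j : Fin m) : (pderiv j G).IsHomogeneous (n - 1) := by
  intro d hd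
  rw [_root_.coeff_pderiv] at hd
  have h2 : coeff (d + Finsupp.single j 1) G ≠ 0 := fun h => hd (by rw [h, mul_zero])
  have h3 := homog_degree hG h2
  rw [show (Finsupp.weight (1 : Fin m → ℕ)) = Finsupp.weight fun _ => 1 from rfl, ← Finsupp.degree_eq_weight_one, degree_eq_sum_univ]
  have h4 : ∑ i, (d + Finsupp.single j 1 : Fin m →₀ ℕ) i = (∑ i, d i) + 1 := by
    simp only [Finsupp.add_apply]
    rw [Finset.sum_add_distrib]
    congr 1
    simp [Finsupp.single_apply]
  rw [h4] at h3
  omega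

lemma pderiv_lform {n : ℕ} (q : Fin n → Fin 4 → K) (j : Fin n) (i : Fin 4) :
    pderiv j (lform q i) = C (q j i) := by
  rw [lform, map_sum]
  have h : ∀ k, pderiv j (C (q k i) * X k : MvPolynomial (Fin n) K)
      = if k = j then C (q k i) else 0 := by
    intro k
    rw [pderiv_C_mul]
    rcases eq_or_ne k j with rfl | hkj
    · rw [pderiv_X_self, if_pos rfl, mul_one]
    · rw [pderiv_X_of_ne hkj, if_neg hkj, mul_zero]
  rw [Finset.sum_congr rfl fun k _ => h k, Finset.sum_ite_eq' Finset.univ j]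
  simp

lemma eval_pderiv_lsub {n : ℕ} (q : Fin n → Fin 4 → K) (x : Fin n → K) (j : Fin n)
    (F : MvPolynomial (Fin 4) K) :
    eval x (pderiv j (aeval (lform q) F))
      = ∑ i, q j i * eval (fun i' => ∑ k, x k * q k i') (pderiv i F) := by
  rw [pderiv_aeval, map_sum]
  refine Finset.sum_congr rfl fun i _ => ?_
  rw [map_mul, pderiv_lform, eval_C, eval_lsub, mul_comm]

lemma homog_lsub {n d : ℕ} (q : Fin n → Fin 4 → K) {F : MvPolynomial (Fin 4) K}
    (hF : F.IsHomogeneous d) : (aeval (lform q) F).IsHomogeneous d := by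
  have h := hF.aeval (n := 1) (lform q)
    (fun i => IsHomogeneous.sum _ _ _ fun k _ => (isHomogeneous_X _ _).C_mul _)
  rwa [one_mul] at h

lemma eval_single_of_homog {m n : ℕ} (hn : n ≠ 0) {G : MvPolynomial (Fin m) K}
    (hG : G.IsHomogeneous n) (k : Fin m) :
    eval (Pi.single k (1 : K)) G = coeff (Finsupp.single k n) G := by
  rw [eval_eq]
  rw [Finset.sum_eq_single (Finsupp.single k n)]
  · rw [Finsupp.support_single_ne_zero _ hn]
    simp
  · intro b hb hbne
    have hbc : coeff b G ≠ 0 := (mem_support_iff).mp hb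
    have hdeg := homog_degree hG hbc
    have hex : ∃ i, i ≠ k ∧ b i ≠ 0 := by
      by_contra hcon
      push_neg at hcon
      apply hbne
      have hsub : b.support ⊆ {k} := by
        intro i hi
        rw [Finset.mem_singleton]
        by_contra hik
        exact (Finsupp.mem_support_iff.mp hi) (hcon i hik)
      have := Finsupp.support_subset_singleton.mp hsub
      rw [this]
      congr 1
      rw [this] at hdeg
      rw [← hdeg]
      simp [Finsupp.single_apply, Finset.sum_ite_eq']
    obtain ⟨i, hik, hbi⟩ := hex
    have hmem : i ∈ b.support := Finsupp.mem_support_iff.mpr hbi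
    rw [Finset.prod_eq_zero hmem]
    · ring
    · rw [Pi.single_eq_of_ne hik]
      exact zero_pow hbi
  · intro hns
    rw [notMem_support_iff.mp hns]
    ring

lemma coeff_eq_zero_of_singular {m : ℕ} {G : MvPolynomial (Fin m) K} (hG : G.IsHomogeneous 3)
    (k : Fin m) (h0 : eval (Pi.single k (1:K)) G = 0)
    (h1 : ∀ j, eval (Pi.single k (1:K)) (pderiv j G) = 0)
    (d : Fin m →₀ ℕ) (hd : 2 ≤ d k) : coeff d G = 0 := by
  by_contra hc
  have hdeg := homog_degree hG hc
  have hk_le : d k ≤ 3 := by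
    have h := Finset.single_le_sum (f := fun i => d i) (fun i _ => Nat.zero_le _)
      (Finset.mem_univ k)
    omega
  have hsplit : d k + ∑ i ∈ Finset.univ.erase k, d i = 3 := by
    rw [← hdeg, ← Finset.add_sum_erase _ _ (Finset.mem_univ k)]
  interval_cases hdk : d k
  · have hsum1 : ∑ i ∈ Finset.univ.erase k, d i = 1 := by omega
    have hex : ∃ j ∈ Finset.univ.erase k, d j ≠ 0 := by
      by_contra hcon
      push_neg at hcon
      rw [Finset.sum_eq_zero hcon] at hsum1
      omega
    obtain ⟨j, hjmem, hj⟩ := hex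
    have hjk : j ≠ k := (Finset.mem_erase.mp hjmem).1
    have hdj : d j = 1 := by
      have h := Finset.single_le_sum (f := fun i => d i) (fun i _ => Nat.zero_le _) hjmem
      omega
    have hrest : ∀ i ∈ (Finset.univ.erase k).erase j, d i = 0 := by
      intro i hi
      have hsub : ∑ x ∈ (Finset.univ.erase k).erase j, d x = 0 := by
        have h := Finset.add_sum_erase _ (fun i => d i) hjmem
        omega
      exact (Finset.sum_eq_zero_iff.mp hsub) i hi
    have hdeq : d = Finsupp.single k 2 + Finsupp.single j 1 := by
      ext i
      rw [Finsupp.add_apply, Finsupp.single_apply, Finsupp.single_apply]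
      split_ifs with hki hji hji
      · exact absurd (hji.trans hki.symm) hjk
      · subst hki; omega
      · subst hji; omega
      · have hmem2 : i ∈ (Finset.univ.erase k).erase j :=
          Finset.mem_erase.mpr ⟨fun h => hji h.symm,
            Finset.mem_erase.mpr ⟨fun h => hki h.symm, Finset.mem_univ i⟩⟩
        have := hrest i hmem2
        omega
    have hpd : (pderiv j G).IsHomogeneous 2 := by
      have h := homog_pderiv hG j
      norm_num at h
      exact h
    have hkey := h1 j
    rw [eval_single_of_homog (by norm_num) hpd k, _root_.coeff_pderiv] at hkey
    have hz : (Finsupp.single k 2 : Fin m →₀ ℕ) j = 0 := by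
      rw [Finsupp.single_apply, if_neg (fun h : k = j => hjk h.symm)]
    rw [hz] at hkey
    push_cast at hkey
    rw [zero_add, one_mul] at hkey
    rw [hdeq] at hc
    exact hc hkey
  · have hsum0 : ∑ i ∈ Finset.univ.erase k, d i = 0 := by omega
    have hdeq : d = Finsupp.single k 3 := by
      ext i
      rw [Finsupp.single_apply]
      split_ifs with hki
      · subst hki; omega
      · exact (Finset.sum_eq_zero_iff.mp hsum0) i
          (Finset.mem_erase.mpr ⟨fun h => hki h.symm, Finset.mem_univ i⟩)
    rw [eval_single_of_homog (by norm_num) hG k] at h0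
    rw [hdeq] at hc
    exact hc h0

noncomputable def mu (v : Fin 4 → ℕ) : Fin 4 →₀ ℕ := Finsupp.equivFunOnFinite.symm v

lemma mu_apply (v : Fin 4 → ℕ) (i : Fin 4) : mu v i = v i := rfl

lemma eq_mu (v : Fin 4 → ℕ) (e : Fin 4 →₀ ℕ) (h0 : e 0 = v 0) (h1 : e 1 = v 1)
    (h2 : e 2 = v 2) (h3 : e 3 = v 3) : mu v = e := by
  ext i
  rw [mu_apply]
  fin_cases i
  exacts [h0.symm, h1.symm, h2.symm, h3.symm]

lemma mu_ne (v w : Fin 4 → ℕ) (h : ∃ i, v i ≠ w i) : mu v ≠ mu w := by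
  obtain ⟨i, hi⟩ := h
  intro h
  exact hi (by rw [← mu_apply v i, h, mu_apply])

lemma recon4 {G : MvPolynomial (Fin 4) K} (hG : G.IsHomogeneous 3)
    (hkill : ∀ d : Fin 4 →₀ ℕ, (∃ k, 2 ≤ d k) → coeff d G = 0) :
    G = monomial (mu ![1,1,1,0]) (coeff (mu ![1,1,1,0]) G)
      + monomial (mu ![1,1,0,1]) (coeff (mu ![1,1,0,1]) G)
      + monomial (mu ![1,0,1,1]) (coeff (mu ![1,0,1,1]) G)
      + monomial (mu ![0,1,1,1]) (coeff (mu ![0,1,1,1]) G) := by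
  apply MvPolynomial.ext
  intro e
  rw [coeff_add, coeff_add, coeff_add, coeff_monomial, coeff_monomial, coeff_monomial,
    coeff_monomial]
  by_cases e1 : mu ![1,1,1,0] = e
  · rw [if_pos e1, if_neg (e1 ▸ mu_ne _ _ ⟨3, by decide⟩),
      if_neg (e1 ▸ mu_ne _ _ ⟨1, by norm_num⟩), if_neg (e1 ▸ mu_ne _ _ ⟨0, by norm_num⟩),
      ← e1]
    ring
  by_cases e2 : mu ![1,1,0,1] = e
  · rw [if_neg e1, if_pos e2, if_neg (e2 ▸ mu_ne _ _ ⟨2, by decide⟩),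
      if_neg (e2 ▸ mu_ne _ _ ⟨0, by norm_num⟩), ← e2]
    ring
  by_cases e3 : mu ![1,0,1,1] = e
  · rw [if_neg e1, if_neg e2, if_pos e3, if_neg (e3 ▸ mu_ne _ _ ⟨0, by norm_num⟩), ← e3]
    ring
  by_cases e4 : mu ![0,1,1,1] = e
  · rw [if_neg e1, if_neg e2, if_neg e3, if_pos e4, ← e4]
    ring
  rw [if_neg e1, if_neg e2, if_neg e3, if_neg e4]
  simp only [add_zero]
  by_contra hc
  have hdeg := homog_degree hG hc
  rw [Fin.sum_univ_four] at hdeg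
  have hle : ∀ k, e k ≤ 1 := by
    intro k
    by_contra hk
    exact hc (hkill e ⟨k, by omega⟩)
  have b0 := hle 0; have b1 := hle 1; have b2 := hle 2; have b3 := hle 3
  have hzero : e 0 = 0 ∨ e 1 = 0 ∨ e 2 = 0 ∨ e 3 = 0 := by omega
  rcases hzero with h | h | h | h
  · exact e4 (eq_mu _ _ (by simpa using h) (by simp; omega) (by simp; omega) (by simp; omega))
  · exact e3 (eq_mu _ _ (by simp; omega) (by simpa using h) (by simp; omega) (by simp; omega))
  · exact e2 (eq_mu _ _ (by simp; omega) (by simp; omega) (by simpa using h) (by simp; omega))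
  · exact e1 (eq_mu _ _ (by simp; omega) (by simp; omega) (by simp; omega) (by simpa using h))


lemma X_dvd_of_coeff {i : Fin 4} {G : MvPolynomial (Fin 4) K}
    (h : ∀ d : Fin 4 →₀ ℕ, d i = 0 → coeff d G = 0) : X i ∣ G := by
  rw [X_dvd_iff_modMonomial_eq_zero]
  apply MvPolynomial.ext
  intro d
  rw [coeff_zero]
  by_cases hle : Finsupp.single i 1 ≤ d
  · exact coeff_modMonomial_of_le _ hle
  · rw [coeff_modMonomial_of_not_le _ hle]
    apply h
    rw [Finsupp.single_le_iff] at hle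
    omega

lemma not_X_dvd {G : MvPolynomial (Fin 4) K} (hG : G.IsHomogeneous 3) (hirr : Irreducible G)
    (i : Fin 4) : ¬ X i ∣ G := by
  rintro ⟨Q, hQ⟩
  rcases hirr.isUnit_or_isUnit hQ with h | h
  · have h2 := h.map (eval (0 : Fin 4 → K))
    rw [eval_X] at h2
    simp at h2
  · have hu := h.map (eval (0 : Fin 4 → K))
    have heval : eval (0 : Fin 4 → K) Q = coeff 0 Q := by
      rw [eval_eq]
      rcases eq_or_ne (coeff 0 Q) 0 with h0 | h0
      · rw [h0]
        apply Finset.sum_eq_zero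
        intro d hd
        rcases eq_or_ne d 0 with rfl | hd0
        · rw [h0]; ring
        · obtain ⟨j, hj⟩ := Finsupp.ne_iff.mp hd0
          rw [Finsupp.coe_zero, Pi.zero_apply] at hj
          rw [Finset.prod_eq_zero (Finsupp.mem_support_iff.mpr hj)]
          · ring
          · exact zero_pow hj
      · rw [Finset.sum_eq_single 0]
        · simp
        · intro d hd hd0
          obtain ⟨j, hj⟩ := Finsupp.ne_iff.mp hd0
          rw [Finsupp.coe_zero, Pi.zero_apply] at hj
          rw [Finset.prod_eq_zero (Finsupp.mem_support_iff.mpr hj)]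
          · ring
          · exact zero_pow hj
        · intro hns
          rw [notMem_support_iff.mp hns]
          ring
    rw [heval] at hu
    have hconst : coeff 0 Q ≠ 0 := hu.ne_zero
    have hcoeff : coeff (Finsupp.single i 1) G = coeff 0 Q := by
      rw [hQ]
      have : Finsupp.single i 1 = Finsupp.single i 1 + 0 := by rw [add_zero]
      rw [this, coeff_X_mul]
    have h3 := homog_degree hG (ne_of_eq_of_ne hcoeff hconst)
    have : ∑ k, (Finsupp.single i 1 : Fin 4 →₀ ℕ) k = 1 := by
      simp [Finsupp.single_apply]
    omega

noncomputable def stdRepr (b : Module.Basis (Fin 4) K (Fin 4 → K)) (l : Fin 4) : Fin 4 → K :=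
  fun k => b.repr (Pi.single l 1) k

lemma irreducible_lsub {q : Fin 4 → Fin 4 → K} (hli : LinearIndependent K q)
    {F : MvPolynomial (Fin 4) K} (hirr : Irreducible F) :
    Irreducible (aeval (lform q) F) := by
  have hcard : Fintype.card (Fin 4) = Module.finrank K (Fin 4 → K) := by
    simp [Module.finrank_fin_fun]
  let b : Module.Basis (Fin 4) K (Fin 4 → K) := basisOfLinearIndependentOfCardEqFinrank hli hcard
  have hb : ⇑b = q := coe_basisOfLinearIndependentOfCardEqFinrank hli hcard
  set N : Fin 4 → Fin 4 → K := stdRepr b with hN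
  have key1 : ∀ l i, ∑ k, N l k * q k i = (if l = i then (1:K) else 0) := by
    intro l i
    have h := b.sum_repr (Pi.single l 1)
    rw [hb] at h
    have h2 := congrFun h i
    rw [Finset.sum_apply] at h2
    have h3 : ∑ k, N l k * q k i = ∑ k, (b.repr (Pi.single l 1) k • q k) i :=
      Finset.sum_congr rfl fun k _ => by
        rw [Pi.smul_apply, smul_eq_mul]; rfl
    rw [h3, h2, Pi.single_apply]
    by_cases h4 : l = i
    · subst h4; simp
    · rw [if_neg h4, if_neg fun h5 => h4 h5.symm]
  have key2 : ∀ l i, ∑ k, q l k * N k i = (if l = i then (1:K) else 0) := by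
    intro l i
    let M1 : Matrix (Fin 4) (Fin 4) K := Matrix.of fun k i => N k i
    let M2 : Matrix (Fin 4) (Fin 4) K := Matrix.of fun k i => q k i
    have hmul : M1 * M2 = 1 := by
      ext l' i'
      rw [Matrix.mul_apply, Matrix.one_apply]
      exact key1 l' i'
    have hmul2 : M2 * M1 = 1 := mul_eq_one_comm.mp hmul
    rw [← Matrix.ext_iff] at hmul2
    have h5 := hmul2 l i
    rw [Matrix.mul_apply, Matrix.one_apply] at h5
    exact h5
  have comp1 : (aeval (lform q)).comp (aeval (lform N)) = AlgHom.id K (MvPolynomial (Fin 4) K) := by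
    apply MvPolynomial.algHom_ext
    intro i
    simp only [AlgHom.comp_apply, aeval_X, AlgHom.id_apply]
    rw [lform, map_sum]
    have hterm : ∀ k, (aeval (lform q)) (C (N k i) * X k) = C (N k i) * lform q k := by
      intro k; rw [map_mul, aeval_C, aeval_X, algebraMap_eq]
    rw [Finset.sum_congr rfl fun k _ => hterm k]
    simp only [lform, Finset.mul_sum]
    rw [Finset.sum_comm]
    have hh : ∀ l, ∑ k, C (N k i) * (C (q l k) * X l) = C (∑ k, q l k * N k i) * X l := by
      intro l
      rw [map_sum, Finset.sum_mul]
      refine Finset.sum_congr rfl fun k _ => ?_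
      rw [← mul_assoc, ← C_mul, mul_comm (N k i) (q l k)]
    rw [Finset.sum_congr rfl fun l _ => hh l]
    rw [Finset.sum_congr rfl fun l (_ : l ∈ Finset.univ) => by rw [key2 l i]]
    rw [Finset.sum_congr rfl fun l (_ : l ∈ Finset.univ) => by
      rw [show (C (if l = i then (1:K) else 0) * X l : MvPolynomial (Fin 4) K)
        = if l = i then X l else 0 by split_ifs <;> simp]]
    rw [Finset.sum_ite_eq' Finset.univ i fun l => X l]
    simp
  have comp2 : (aeval (lform N)).comp (aeval (lform q)) = AlgHom.id K (MvPolynomial (Fin 4) K) := by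
    apply MvPolynomial.algHom_ext
    intro i
    simp only [AlgHom.comp_apply, aeval_X, AlgHom.id_apply]
    rw [lform, map_sum]
    have hterm : ∀ k, (aeval (lform N)) (C (q k i) * X k) = C (q k i) * lform N k := by
      intro k; rw [map_mul, aeval_C, aeval_X, algebraMap_eq]
    rw [Finset.sum_congr rfl fun k _ => hterm k]
    simp only [lform, Finset.mul_sum]
    rw [Finset.sum_comm]
    have hh : ∀ l, ∑ k, C (q k i) * (C (N l k) * X l) = C (∑ k, N l k * q k i) * X l := by
      intro l
      rw [map_sum, Finset.sum_mul]
      refine Finset.sum_congr rfl fun k _ => ?_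
      rw [← mul_assoc, ← C_mul, mul_comm (q k i) (N l k)]
    rw [Finset.sum_congr rfl fun l _ => hh l]
    rw [Finset.sum_congr rfl fun l (_ : l ∈ Finset.univ) => by rw [key1 l i]]
    rw [Finset.sum_congr rfl fun l (_ : l ∈ Finset.univ) => by
      rw [show (C (if l = i then (1:K) else 0) * X l : MvPolynomial (Fin 4) K)
        = if l = i then X l else 0 by split_ifs <;> simp]]
    rw [Finset.sum_ite_eq' Finset.univ i fun l => X l]
    simp
  let e : MvPolynomial (Fin 4) K ≃ₐ[K] MvPolynomial (Fin 4) K :=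
    AlgEquiv.ofAlgHom (aeval (lform q)) (aeval (lform N)) comp1 comp2
  have he : aeval (lform q) F = e F := rfl
  rw [he]
  exact (MulEquiv.irreducible_iff (e : MvPolynomial (Fin 4) K ≃* MvPolynomial (Fin 4) K)).mpr hirr

noncomputable def mu2 (v : Fin 2 → ℕ) : Fin 2 →₀ ℕ := Finsupp.equivFunOnFinite.symm v

lemma mu2_apply (v : Fin 2 → ℕ) (i : Fin 2) : mu2 v i = v i := rfl

lemma vanish2 {G : MvPolynomial (Fin 2) K} (hG : G.IsHomogeneous 3)
    (hkill : ∀ d : Fin 2 →₀ ℕ, (∃ k, 2 ≤ d k) → coeff d G = 0) : G = 0 := by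
  apply MvPolynomial.ext
  intro e
  rw [coeff_zero]
  by_contra hc
  have hdeg := homog_degree hG hc
  rw [Fin.sum_univ_two] at hdeg
  have h0 : e 0 ≤ 1 := by by_contra h; exact hc (hkill e ⟨0, by omega⟩)
  have h1 : e 1 ≤ 1 := by by_contra h; exact hc (hkill e ⟨1, by omega⟩)
  omega

lemma recon2 {G : MvPolynomial (Fin 2) K} (hG : G.IsHomogeneous 2)
    (h20 : coeff (Finsupp.single 0 2) G = 0) (h02 : coeff (Finsupp.single 1 2) G = 0) :
    G = monomial (mu2 ![1,1]) (coeff (mu2 ![1,1]) G) := by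
  apply MvPolynomial.ext
  intro e
  rw [coeff_monomial]
  by_cases he : mu2 ![1,1] = e
  · rw [if_pos he, he]
  · rw [if_neg he]
    by_contra hc
    have hdeg := homog_degree hG (Ne.symm (ne_of_ne_of_eq (Ne.symm hc) rfl))
    rw [Fin.sum_univ_two] at hdeg
    rcases Nat.lt_or_ge (e 0) 2 with hl | hg
    · rcases Nat.lt_or_ge (e 1) 2 with hl' | hg'
      · -- e 0 ≤ 1, e 1 ≤ 1, sum 2 → both 1 → e = mu2 ![1,1]
        apply he
        ext i
        rw [mu2_apply]
        fin_cases i <;> simp <;> omega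
      · -- e 1 ≥ 2 → e = single 1 2
        have : e = Finsupp.single 1 2 := by
          ext i
          rw [Finsupp.single_apply]
          fin_cases i <;> simp <;> omega
        rw [this] at hc
        exact hc h02
    · have : e = Finsupp.single 0 2 := by
        ext i
        rw [Finsupp.single_apply]
        fin_cases i <;> simp <;> omega
      rw [this] at hc
      exact hc h20

lemma line_case [Infinite K] {F : MvPolynomial (Fin 4) K} (hhom : F.IsHomogeneous 3)
    (S : Finset (Fin 4 → K))
    (hS : ∀ v : Fin 4 → K, v ≠ 0 → eval v F = 0 → (∀ i, eval v (pderiv i F) = 0) →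
        ∃ w ∈ S, ∃ c : K, v = c • w)
    {a b : Fin 4 → K} (hab : LinearIndependent K ![a, b])
    (haF : eval a F = 0) (haD : ∀ i, eval a (pderiv i F) = 0)
    (hbF : eval b F = 0) (hbD : ∀ i, eval b (pderiv i F) = 0)
    {α β : K} (hα : α ≠ 0) (hβ : β ≠ 0)
    (hcD : ∀ i, eval (α • a + β • b) (pderiv i F) = 0) : False := by
  have hpair := LinearIndependent.pair_iff.mp hab
  set q : Fin 2 → Fin 4 → K := ![a, b] with hqdef
  have hpt : ∀ x : Fin 2 → K, (fun i => ∑ k, x k * q k i) = x 0 • a + x 1 • b := by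
    intro x
    funext i
    rw [Fin.sum_univ_two]
    simp [hqdef]
  have hpt0 : (fun i => ∑ k, (Pi.single (0 : Fin 2) (1:K) : Fin 2 → K) k * q k i) = a := by
    rw [hpt]; simp
  have hpt1 : (fun i => ∑ k, (Pi.single (1 : Fin 2) (1:K) : Fin 2 → K) k * q k i) = b := by
    rw [hpt]; simp
  -- all partial derivatives vanish on the line
  have hlineD : ∀ (s t : K) (j : Fin 4), eval (s • a + t • b) (pderiv j F) = 0 := by
    intro s t j
    have hpd2 : (pderiv j F).IsHomogeneous 2 := by
      have h := homog_pderiv hhom j; norm_num at h; exact h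
    set H : MvPolynomial (Fin 2) K := aeval (lform q) (pderiv j F) with hHdef
    have hH2 : H.IsHomogeneous 2 := homog_lsub q hpd2
    have h20 : coeff (Finsupp.single 0 2) H = 0 := by
      rw [← eval_single_of_homog (by norm_num) hH2 0, hHdef, eval_lsub, hpt0, haD j]
    have h02 : coeff (Finsupp.single 1 2) H = 0 := by
      rw [← eval_single_of_homog (by norm_num) hH2 1, hHdef, eval_lsub, hpt1, hbD j]
    have hrec := recon2 hH2 h20 h02
    have hc11 : coeff (mu2 ![1,1]) H = 0 := by
      have h := hcD j
      have heval : eval ![α, β] H = eval (α • a + β • b) (pderiv j F) := by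
        rw [hHdef, eval_lsub]
        congr 1
        rw [hpt]
        simp
      rw [hrec] at heval
      rw [eval_monomial] at heval
      rw [Finsupp.prod_fintype _ _ (fun i => pow_zero _)] at heval
      rw [Fin.prod_univ_two] at heval
      simp only [mu2_apply] at heval
      norm_num at heval
      rw [h] at heval
      have hsh : coeff (mu2 ![1,1]) H * (α * β) = 0 := by linear_combination heval
      rcases mul_eq_zero.mp hsh with h' | h'
      · exact h'
      · rcases mul_eq_zero.mp h' with h'' | h''
        · exact absurd h'' hα
        · exact absurd h'' hβ
    have hH0 : H = 0 := by rw [hrec, hc11, monomial_zero]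
    have := eval_lsub q ![s, t] (pderiv j F)
    rw [← hHdef, hH0] at this
    rw [hpt] at this
    simp only [map_zero] at this
    have h2 : (![s, t] : Fin 2 → K) 0 • a + ![s, t] 1 • b = s • a + t • b := by simp
    rw [h2] at this
    exact this.symm
  -- F vanishes on the line
  have hlineF : ∀ (s t : K), eval (s • a + t • b) F = 0 := by
    intro s t
    set G : MvPolynomial (Fin 2) K := aeval (lform q) F with hGdef
    have hG3 : G.IsHomogeneous 3 := homog_lsub q hhom
    have hs0F : eval (Pi.single (0:Fin 2) (1:K)) G = 0 := by
      rw [hGdef, eval_lsub, hpt0, haF]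
    have hs0D : ∀ j', eval (Pi.single (0:Fin 2) (1:K)) (pderiv j' G) = 0 := by
      intro j'
      rw [hGdef, eval_pderiv_lsub, hpt0]
      exact Finset.sum_eq_zero fun i _ => by rw [haD i, mul_zero]
    have hs1F : eval (Pi.single (1:Fin 2) (1:K)) G = 0 := by
      rw [hGdef, eval_lsub, hpt1, hbF]
    have hs1D : ∀ j', eval (Pi.single (1:Fin 2) (1:K)) (pderiv j' G) = 0 := by
      intro j'
      rw [hGdef, eval_pderiv_lsub, hpt1]
      exact Finset.sum_eq_zero fun i _ => by rw [hbD i, mul_zero]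
    have hG0 : G = 0 := by
      apply vanish2 hG3
      intro d hd
      obtain ⟨k, hk⟩ := hd
      fin_cases k
      · exact coeff_eq_zero_of_singular hG3 0 hs0F hs0D d hk
      · exact coeff_eq_zero_of_singular hG3 1 hs1F hs1D d hk
    have := eval_lsub q ![s, t] F
    rw [← hGdef, hG0] at this
    rw [hpt] at this
    simp only [map_zero] at this
    have h2 : (![s, t] : Fin 2 → K) 0 • a + ![s, t] 1 • b = s • a + t • b := by simp
    rw [h2] at this
    exact this.symm
  -- pigeonhole
  have hne : ∀ s : K, a + s • b ≠ 0 := by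
    intro s h
    have h' : (1 : K) • a + s • b = 0 := by rw [one_smul]; exact h
    exact one_ne_zero (hpair 1 s h').1
  have hsing : ∀ s : K, ∃ w ∈ S, ∃ c : K, a + s • b = c • w := by
    intro s
    apply hS _ (hne s)
    · have := hlineF 1 s; rwa [one_smul] at this
    · intro i; have := hlineD 1 s i; rwa [one_smul] at this
  let f : K → {x // x ∈ S} := fun s =>
    ⟨(hsing s).choose, (hsing s).choose_spec.1⟩
  obtain ⟨s, s', hss', hfeq⟩ := Finite.exists_ne_map_eq_of_infinite f
  obtain ⟨c, hc⟩ := (hsing s).choose_spec.2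
  obtain ⟨c', hc'⟩ := (hsing s').choose_spec.2
  have hw : (hsing s).choose = (hsing s').choose := congrArg Subtype.val hfeq
  rw [← hw] at hc'
  have hcne : c ≠ 0 := by
    intro h
    rw [h, zero_smul] at hc
    exact hne s hc
  -- a + s' • b = (c'/c) • (a + s • b)
  have hkey : a + s' • b = (c' / c) • (a + s • b) := by
    rw [hc, hc', smul_smul]
    congr 1
    field_simp
  rw [smul_add, smul_smul] at hkey
  have hzero : (1 - c'/c) • a + (s' - (c'/c) * s) • b = 0 := by
    have h0 : (1 - c'/c) • a + (s' - (c'/c) * s) • b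
        = (a + s' • b) - ((c'/c) • a + (c'/c * s) • b) := by
      rw [sub_smul, sub_smul, one_smul]
      abel
    rw [h0, ← hkey]
    exact sub_self _
  have hst := hpair _ _ hzero
  have hc1 : c'/c = 1 := (sub_eq_zero.mp hst.1).symm
  have hs2 := hst.2
  rw [hc1, one_mul] at hs2
  exact hss' (sub_eq_zero.mp hs2).symm

lemma classify {G : MvPolynomial (Fin 4) K} (hG : G.IsHomogeneous 3) {d : Fin 4 →₀ ℕ}
    (hc : coeff d G ≠ 0) (hb : ∀ k, d k ≤ 1) :
    d = mu ![0,1,1,1] ∨ d = mu ![1,0,1,1] ∨ d = mu ![1,1,0,1] ∨ d = mu ![1,1,1,0] := by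
  have hdeg := homog_degree hG hc
  rw [Fin.sum_univ_four] at hdeg
  have b0 := hb 0; have b1 := hb 1; have b2 := hb 2; have b3 := hb 3
  have hzero : d 0 = 0 ∨ d 1 = 0 ∨ d 2 = 0 ∨ d 3 = 0 := by omega
  rcases hzero with h | h | h | h
  · exact Or.inl (eq_mu _ _ (by simpa using h) (by simp; omega) (by simp; omega)
      (by simp; omega)).symm
  · exact Or.inr (Or.inl (eq_mu _ _ (by simp; omega) (by simpa using h) (by simp; omega)
      (by simp; omega)).symm)
  · exact Or.inr (Or.inr (Or.inl (eq_mu _ _ (by simp; omega) (by simp; omega)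
      (by simpa using h) (by simp; omega)).symm))
  · exact Or.inr (Or.inr (Or.inr (eq_mu _ _ (by simp; omega) (by simp; omega) (by simp; omega)
      (by simpa using h)).symm))

lemma eval_monomial_mu (y : Fin 4 → K) (v : Fin 4 → ℕ) (c : K) :
    eval y (monomial (mu v) c) = c * (y 0 ^ v 0 * y 1 ^ v 1 * y 2 ^ v 2 * y 3 ^ v 3) := by
  rw [eval_monomial, Finsupp.prod_fintype _ _ (fun i => pow_zero _), Fin.prod_univ_four]
  simp only [mu_apply]
  try ring

lemma plane_core {G : MvPolynomial (Fin 4) K} (hG : G.IsHomogeneous 3) (hirr : Irreducible G)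
    (hkill : ∀ d : Fin 4 →₀ ℕ, (∃ k, k ≠ 0 ∧ 2 ≤ d k) → coeff d G = 0)
    {α β γ : K} (hα : α ≠ 0) (hβ : β ≠ 0) (hγ : γ ≠ 0)
    (hz : eval ![0, α, β, γ] G = 0) : False := by
  have ha : coeff (mu ![0,1,1,1]) G = 0 := by
    have h1 : eval ![0, α, β, γ] G = coeff (mu ![0,1,1,1]) G * (α * β * γ) := by
      rw [eval_eq']
      rw [Finset.sum_eq_single (mu ![0,1,1,1])]
      · rw [Fin.prod_univ_four]
        simp only [mu_apply]
        norm_num [Matrix.cons_val_two, Matrix.cons_val_three]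
      · intro b hbs hbne
        by_cases hb0 : b 0 = 0
        · by_cases hk : ∃ k, k ≠ 0 ∧ 2 ≤ b k
          · rw [hkill b hk]
            ring
          · push_neg at hk
            have hble : ∀ k, b k ≤ 1 := by
              intro k
              rcases eq_or_ne k 0 with rfl | hk0
              · omega
              · have := hk k hk0; omega
            rcases classify hG (mem_support_iff.mp hbs) hble with h | h | h | h
            · exact absurd h (by exact fun hh => hbne hh)
            · rw [h] at hb0; rw [mu_apply] at hb0; simp at hb0
            · rw [h] at hb0; rw [mu_apply] at hb0; simp at hb0
            · rw [h] at hb0; rw [mu_apply] at hb0; simp at hb0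
        · rw [Finset.prod_eq_zero (Finset.mem_univ 0)]
          · ring
          · have : (![0, α, β, γ] : Fin 4 → K) 0 = 0 := rfl
            rw [this]
            exact zero_pow hb0
      · intro hns
        rw [notMem_support_iff.mp hns]
        ring
    rw [hz] at h1
    rcases mul_eq_zero.mp h1.symm with h | h
    · exact h
    · rcases mul_eq_zero.mp h with h' | h'
      · rcases mul_eq_zero.mp h' with h'' | h''
        · exact absurd h'' hα
        · exact absurd h'' hβ
      · exact absurd h' hγ
  apply not_X_dvd hG hirr 0
  apply X_dvd_of_coeff
  intro e h0
  by_contra hc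
  have hble : ∀ k, e k ≤ 1 := by
    intro k
    rcases eq_or_ne k 0 with rfl | hk0
    · omega
    · by_contra hgt
      exact hc (hkill e ⟨k, hk0, by omega⟩)
  rcases classify hG hc hble with h | h | h | h
  · rw [h] at hc; exact hc ha
  · rw [h] at h0; rw [mu_apply] at h0; simp at h0
  · rw [h] at h0; rw [mu_apply] at h0; simp at h0
  · rw [h] at h0; rw [mu_apply] at h0; simp at h0

lemma main_core {G : MvPolynomial (Fin 4) K} (hG : G.IsHomogeneous 3) (hirr : Irreducible G)
    (hkill : ∀ d : Fin 4 →₀ ℕ, (∃ k, 2 ≤ d k) → coeff d G = 0)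
    (y : Fin 4 → K) (hyG : eval y G = 0) (hyD : eval y (pderiv 0 G) = 0)
    (hcase : (y 1 ≠ 0 ∧ y 2 ≠ 0 ∧ y 3 ≠ 0) ∨ (y 1 = 0 ∧ y 2 ≠ 0 ∧ y 3 ≠ 0)
      ∨ (y 2 = 0 ∧ y 1 ≠ 0 ∧ y 3 ≠ 0) ∨ (y 3 = 0 ∧ y 1 ≠ 0 ∧ y 2 ≠ 0)) : False := by
  have hble : ∀ (e : Fin 4 →₀ ℕ), coeff e G ≠ 0 → ∀ k, e k ≤ 1 := by
    intro e hc k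
    by_contra hgt
    exact hc (hkill e ⟨k, by omega⟩)
  have hA : coeff (mu ![1,1,1,0]) G ≠ 0 := by
    intro h
    apply not_X_dvd hG hirr 3
    apply X_dvd_of_coeff
    intro e h3
    by_contra hc
    rcases classify hG hc (hble e hc) with heq | heq | heq | heq
    · rw [heq] at h3; rw [mu_apply] at h3; simp at h3
    · rw [heq] at h3; rw [mu_apply] at h3; simp at h3
    · rw [heq] at h3; rw [mu_apply] at h3; simp at h3
    · rw [heq] at hc; exact hc h
  have hB : coeff (mu ![1,1,0,1]) G ≠ 0 := by
    intro h
    apply not_X_dvd hG hirr 2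
    apply X_dvd_of_coeff
    intro e h3
    by_contra hc
    rcases classify hG hc (hble e hc) with heq | heq | heq | heq
    · rw [heq] at h3; rw [mu_apply] at h3; simp at h3
    · rw [heq] at h3; rw [mu_apply] at h3; simp at h3
    · rw [heq] at hc; exact hc h
    · rw [heq] at h3; rw [mu_apply] at h3; simp at h3
  have hC : coeff (mu ![1,0,1,1]) G ≠ 0 := by
    intro h
    apply not_X_dvd hG hirr 1
    apply X_dvd_of_coeff
    intro e h3
    by_contra hc
    rcases classify hG hc (hble e hc) with heq | heq | heq | heq
    · rw [heq] at h3; rw [mu_apply] at h3; simp at h3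
    · rw [heq] at hc; exact hc h
    · rw [heq] at h3; rw [mu_apply] at h3; simp at h3
    · rw [heq] at h3; rw [mu_apply] at h3; simp at h3
  have hD : coeff (mu ![0,1,1,1]) G ≠ 0 := by
    intro h
    apply not_X_dvd hG hirr 0
    apply X_dvd_of_coeff
    intro e h3
    by_contra hc
    rcases classify hG hc (hble e hc) with heq | heq | heq | heq
    · rw [heq] at hc; exact hc h
    · rw [heq] at h3; rw [mu_apply] at h3; simp at h3
    · rw [heq] at h3; rw [mu_apply] at h3; simp at h3
    · rw [heq] at h3; rw [mu_apply] at h3; simp at h3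
  have hrec := recon4 hG hkill
  -- the value equation
  have hE : coeff (mu ![1,1,1,0]) G * (y 0 * y 1 * y 2)
      + coeff (mu ![1,1,0,1]) G * (y 0 * y 1 * y 3)
      + coeff (mu ![1,0,1,1]) G * (y 0 * y 2 * y 3)
      + coeff (mu ![0,1,1,1]) G * (y 1 * y 2 * y 3) = 0 := by
    rw [hrec] at hyG
    rw [map_add, map_add, map_add, eval_monomial_mu, eval_monomial_mu, eval_monomial_mu,
      eval_monomial_mu] at hyG
    norm_num [Matrix.cons_val_two, Matrix.cons_val_three] at hyG
    linear_combination hyG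
  -- the derivative equation
  have hsub1 : mu ![1,1,1,0] - Finsupp.single 0 1 = mu ![0,1,1,0] := by
    ext i
    rw [Finsupp.tsub_apply, mu_apply, mu_apply, Finsupp.single_apply]
    fin_cases i <;> simp
  have hsub2 : mu ![1,1,0,1] - Finsupp.single 0 1 = mu ![0,1,0,1] := by
    ext i
    rw [Finsupp.tsub_apply, mu_apply, mu_apply, Finsupp.single_apply]
    fin_cases i <;> simp
  have hsub3 : mu ![1,0,1,1] - Finsupp.single 0 1 = mu ![0,0,1,1] := by
    ext i
    rw [Finsupp.tsub_apply, mu_apply, mu_apply, Finsupp.single_apply]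
    fin_cases i <;> simp
  have hD0 : coeff (mu ![1,1,1,0]) G * (y 1 * y 2)
      + coeff (mu ![1,1,0,1]) G * (y 1 * y 3)
      + coeff (mu ![1,0,1,1]) G * (y 2 * y 3) = 0 := by
    rw [hrec] at hyD
    simp only [map_add, pderiv_monomial] at hyD
    rw [hsub1, hsub2, hsub3] at hyD
    simp only [mu_apply] at hyD
    norm_num [monomial_zero] at hyD
    rw [eval_monomial_mu, eval_monomial_mu, eval_monomial_mu] at hyD
    norm_num [Matrix.cons_val_two, Matrix.cons_val_three] at hyD
    linear_combination hyD
  rcases hcase with ⟨h1, h2, h3⟩ | ⟨h1, h2, h3⟩ | ⟨h1, h2, h3⟩ | ⟨h1, h2, h3⟩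
  · have hkey : coeff (mu ![0,1,1,1]) G * (y 1 * y 2 * y 3) = 0 := by
      linear_combination hE - y 0 * hD0
    rcases mul_eq_zero.mp hkey with h | h
    · exact hD h
    · rcases mul_eq_zero.mp h with h' | h'
      · rcases mul_eq_zero.mp h' with h'' | h''
        · exact h1 h''
        · exact h2 h''
      · exact h3 h'
  · have hkey : coeff (mu ![1,0,1,1]) G * (y 2 * y 3) = 0 := by
      linear_combination hD0 - (y 2 * coeff (mu ![1,1,1,0]) G + y 3 * coeff (mu ![1,1,0,1]) G) * h1
    rcases mul_eq_zero.mp hkey with h | h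
    · exact hC h
    · rcases mul_eq_zero.mp h with h' | h'
      · exact h2 h'
      · exact h3 h'
  · have hkey : coeff (mu ![1,1,0,1]) G * (y 1 * y 3) = 0 := by
      linear_combination hD0 - (y 1 * coeff (mu ![1,1,1,0]) G + y 3 * coeff (mu ![1,0,1,1]) G) * h1
    rcases mul_eq_zero.mp hkey with h | h
    · exact hB h
    · rcases mul_eq_zero.mp h with h' | h'
      · exact h2 h'
      · exact h3 h'
  · have hkey : coeff (mu ![1,1,1,0]) G * (y 1 * y 2) = 0 := by
      linear_combination hD0 - (y 1 * coeff (mu ![1,1,0,1]) G + y 2 * coeff (mu ![1,0,1,1]) G) * h1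
    rcases mul_eq_zero.mp hkey with h | h
    · exact hA h
    · rcases mul_eq_zero.mp h with h' | h'
      · exact h2 h'
      · exact h3 h'

lemma sum_apply_smul {n : ℕ} (q : Fin n → Fin 4 → K) (x : Fin n → K) :
    (fun i => ∑ k, x k * q k i) = ∑ k, x k • q k := by
  funext i
  rw [Finset.sum_apply]
  exact Finset.sum_congr rfl fun k _ => by rw [Pi.smul_apply, smul_eq_mul]

lemma pt_single (q : Fin 4 → Fin 4 → K) (k : Fin 4) :
    (fun i => ∑ l, (Pi.single k (1:K) : Fin 4 → K) l * q l i) = q k := by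
  funext i
  rw [Finset.sum_eq_single k]
  · simp
  · intro l _ hlk
    rw [Pi.single_eq_of_ne hlk, zero_mul]
  · intro h
    exact absurd (Finset.mem_univ k) h

end Aux

/-- A normal cubic surface in `ℙ³` over an algebraically closed field has at most 4 singular
points: there cannot exist 5 pairwise distinct (as points of `ℙ³`) singular points. -/
theorem normal_cubic_at_most_four_singular_points
    (K : Type*) [Field K] [IsAlgClosed K]
    (F : MvPolynomial (Fin 4) K) (hhom : F.IsHomogeneous 3) (hirr : Irreducible F)
    (hnormal : ∃ S : Finset (Fin 4 → K),
      ∀ v : Fin 4 → K, v ≠ 0 → eval v F = 0 → (∀ i, eval v (pderiv i F) = 0) →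
        ∃ w ∈ S, ∃ c : K, v = c • w)
    (p : Fin 5 → (Fin 4 → K)) (hp0 : ∀ i, p i ≠ 0)
    (hsing : ∀ i, eval (p i) F = 0 ∧ ∀ j, eval (p i) (pderiv j F) = 0)
    (hdist : ∀ i j, i ≠ j → ¬ ∃ c : K, p i = c • p j) :
    False := by
  classical
  obtain ⟨S, hS⟩ := hnormal
  have hF0 : ∀ i, eval (p i) F = 0 := fun i => (hsing i).1
  have hFD : ∀ i j, eval (p i) (pderiv j F) = 0 := fun i => (hsing i).2
  -- pairwise projective distinctness gives linear independence of pairs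
  have hpair : ∀ i j, i ≠ j → LinearIndependent K ![p i, p j] := by
    intro i j hij
    rw [LinearIndependent.pair_iff]
    intro s t hst
    by_cases hs : s = 0
    · subst hs
      rw [zero_smul, zero_add] at hst
      rcases smul_eq_zero.mp hst with h | h
      · exact ⟨rfl, h⟩
      · exact absurd h (hp0 j)
    · exfalso
      apply hdist i j hij
      refine ⟨s⁻¹ * (-t), ?_⟩
      have h1 : s • p i = (-t) • p j := by
        rw [neg_smul]
        exact eq_neg_of_add_eq_zero_left hst
      calc p i = s⁻¹ • (s • p i) := by rw [smul_smul, inv_mul_cancel₀ hs, one_smul]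
        _ = s⁻¹ • ((-t) • p j) := by rw [h1]
        _ = (s⁻¹ * (-t)) • p j := by rw [smul_smul]
  -- no three of the points are projectively collinear
  have noColl : ∀ (i j k : Fin 5), i ≠ j → i ≠ k → j ≠ k → ∀ α β : K,
      α • p i + β • p j = p k → False := by
    intro i j k hij hik hjk α β hcomb
    by_cases hα : α = 0
    · subst hα
      rw [zero_smul, zero_add] at hcomb
      exact hdist k j (Ne.symm hjk) ⟨β, hcomb.symm⟩
    · by_cases hβ : β = 0
      · subst hβ
        rw [zero_smul, add_zero] at hcomb
        exact hdist k i (Ne.symm hik) ⟨α, hcomb.symm⟩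
      · exact line_case hhom S hS (hpair i j hij) (hF0 i) (hFD i) (hF0 j) (hFD j) hα hβ
          (fun t => by rw [hcomb]; exact hFD k t)
  -- linear independence of the first three points
  have hli3 : LinearIndependent K ![p 0, p 1, p 2] := by
    apply linearIndependent_fin_cons.mpr
    constructor
    · apply linearIndependent_fin_cons.mpr
      constructor
      · apply linearIndependent_fin_cons.mpr
        constructor
        · exact linearIndependent_empty_type
        · intro hmem
          obtain ⟨c, hc⟩ := (Submodule.mem_span_range_iff_exists_fun K).mp hmem
          simp at hc
          exact hp0 2 hc.symm
      · intro hmem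
        obtain ⟨c, hc⟩ := (Submodule.mem_span_range_iff_exists_fun K).mp hmem
        rw [Fin.sum_univ_one] at hc
        exact hdist 1 2 (by decide) ⟨c 0, hc.symm⟩
    · intro hmem
      obtain ⟨c, hc⟩ := (Submodule.mem_span_range_iff_exists_fun K).mp hmem
      rw [Fin.sum_univ_two] at hc
      exact noColl 1 2 0 (by decide) (by decide) (by decide) (c 0) (c 1) hc
  by_cases hspan : p 3 ∈ Submodule.span K (Set.range ![p 0, p 1, p 2])
  · -- plane case: four coplanar singular points
    obtain ⟨cf, hcf⟩ := (Submodule.mem_span_range_iff_exists_fun K).mp hspan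
    rw [Fin.sum_univ_three] at hcf
    have hcf' : cf 0 • p 0 + cf 1 • p 1 + cf 2 • p 2 = p 3 := hcf
    have hc0 : cf 0 ≠ 0 := by
      intro h
      rw [h, zero_smul, zero_add] at hcf'
      exact noColl 1 2 3 (by decide) (by decide) (by decide) (cf 1) (cf 2) hcf'
    have hc1 : cf 1 ≠ 0 := by
      intro h
      rw [h, zero_smul, add_zero] at hcf'
      exact noColl 0 2 3 (by decide) (by decide) (by decide) (cf 0) (cf 2) hcf'
    have hc2 : cf 2 ≠ 0 := by
      intro h
      rw [h, zero_smul] at hcf'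
      exact noColl 0 1 3 (by decide) (by decide) (by decide) (cf 0) (cf 1)
        (by rw [← hcf']; abel)
    -- choose a vector outside the plane
    have hw : ∃ w : Fin 4 → K, w ∉ Submodule.span K (Set.range ![p 0, p 1, p 2]) := by
      by_contra hcon
      push_neg at hcon
      have htop : ⊤ ≤ Submodule.span K (Set.range ![p 0, p 1, p 2]) := fun x _ => hcon x
      let bb : Module.Basis (Fin 3) K (Fin 4 → K) := Module.Basis.mk hli3 htop
      have h3 := Module.finrank_eq_card_basis bb
      rw [Module.finrank_fin_fun] at h3
      simp at h3
    obtain ⟨w, hwmem⟩ := hw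
    have hli4 : LinearIndependent K ![w, p 0, p 1, p 2] :=
      linearIndependent_fin_cons.mpr ⟨hli3, hwmem⟩
    set r : Fin 4 → Fin 4 → K := ![w, p 0, p 1, p 2] with hrdef
    set G : MvPolynomial (Fin 4) K := aeval (lform r) F with hGdef
    have hG3 : G.IsHomogeneous 3 := homog_lsub r hhom
    have hGirr : Irreducible G := irreducible_lsub hli4 hirr
    have hsingrow : ∀ k : Fin 4, k ≠ 0 → ∃ t : Fin 5, r k = p t := by
      intro k hk
      fin_cases k
      · exact absurd rfl hk
      · exact ⟨0, rfl⟩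
      · exact ⟨1, rfl⟩
      · exact ⟨2, rfl⟩
    have hkill : ∀ d : Fin 4 →₀ ℕ, (∃ k, k ≠ 0 ∧ 2 ≤ d k) → coeff d G = 0 := by
      rintro d ⟨k, hk0, hk2⟩
      obtain ⟨t, ht⟩ := hsingrow k hk0
      apply coeff_eq_zero_of_singular hG3 k _ _ d hk2
      · rw [hGdef, eval_lsub, pt_single, ht, hF0 t]
      · intro j
        rw [hGdef, eval_pderiv_lsub, pt_single, ht]
        exact Finset.sum_eq_zero fun i _ => by rw [hFD t i, mul_zero]
    have hz : eval ![0, cf 0, cf 1, cf 2] G = 0 := by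
      rw [hGdef, eval_lsub]
      have hpt : (fun i => ∑ k, (![0, cf 0, cf 1, cf 2] : Fin 4 → K) k * r k i) = p 3 := by
        funext i
        rw [Fin.sum_univ_four]
        have : (0:K) * r 0 i + cf 0 * r 1 i + cf 1 * r 2 i + cf 2 * r 3 i
            = cf 0 * p 0 i + cf 1 * p 1 i + cf 2 * p 2 i := by
          rw [hrdef]
          simp
        rw [show ((![0, cf 0, cf 1, cf 2] : Fin 4 → K) 0) = 0 from rfl,
          show ((![0, cf 0, cf 1, cf 2] : Fin 4 → K) 1) = cf 0 from rfl,
          show ((![0, cf 0, cf 1, cf 2] : Fin 4 → K) 2) = cf 1 from rfl,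
          show ((![0, cf 0, cf 1, cf 2] : Fin 4 → K) 3) = cf 2 from rfl, this]
        have := congrFun hcf' i
        simpa using this
      rw [hpt, hF0 3]
    exact plane_core hG3 hGirr hkill hc0 hc1 hc2 hz
  · -- main case: four linearly independent singular points
    have hli4 : LinearIndependent K ![p 3, p 0, p 1, p 2] :=
      linearIndependent_fin_cons.mpr ⟨hli3, hspan⟩
    set r : Fin 4 → Fin 4 → K := ![p 3, p 0, p 1, p 2] with hrdef
    have hrow : ∀ k : Fin 4, ∃ t : Fin 5, r k = p t := by
      intro k
      fin_cases k
      · exact ⟨3, rfl⟩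
      · exact ⟨0, rfl⟩
      · exact ⟨1, rfl⟩
      · exact ⟨2, rfl⟩
    set G : MvPolynomial (Fin 4) K := aeval (lform r) F with hGdef
    have hG3 : G.IsHomogeneous 3 := homog_lsub r hhom
    have hGirr : Irreducible G := irreducible_lsub hli4 hirr
    have hkill : ∀ d : Fin 4 →₀ ℕ, (∃ k, 2 ≤ d k) → coeff d G = 0 := by
      rintro d ⟨k, hk2⟩
      obtain ⟨t, ht⟩ := hrow k
      apply coeff_eq_zero_of_singular hG3 k _ _ d hk2
      · rw [hGdef, eval_lsub, pt_single, ht, hF0 t]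
      · intro j
        rw [hGdef, eval_pderiv_lsub, pt_single, ht]
        exact Finset.sum_eq_zero fun i _ => by rw [hFD t i, mul_zero]
    have hcard : Fintype.card (Fin 4) = Module.finrank K (Fin 4 → K) := by
      simp [Module.finrank_fin_fun]
    let b : Module.Basis (Fin 4) K (Fin 4 → K) := basisOfLinearIndependentOfCardEqFinrank hli4 hcard
    have hb : ⇑b = r := coe_basisOfLinearIndependentOfCardEqFinrank hli4 hcard
    set y : Fin 4 → K := fun k => b.repr (p 4) k with hydef
    have hyrep : y 0 • p 3 + y 1 • p 0 + y 2 • p 1 + y 3 • p 2 = p 4 := by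
      have h := b.sum_repr (p 4)
      rw [hb] at h
      rw [← h, Fin.sum_univ_four]
      rfl
    have hysum : (fun i => ∑ k, y k * r k i) = p 4 := by
      rw [sum_apply_smul]
      rw [← hyrep, Fin.sum_univ_four]
      rfl
    have hyG : eval y G = 0 := by
      rw [hGdef, eval_lsub, hysum, hF0 4]
    have hyD : eval y (pderiv 0 G) = 0 := by
      rw [hGdef, eval_pderiv_lsub, hysum]
      exact Finset.sum_eq_zero fun i _ => by rw [hFD 4 i, mul_zero]
    -- a pair of vanishing coordinates among y 1, y 2, y 3 leads to collinearity
    have pairzero : ∀ (u v : Fin 5), u ≠ v → 4 ≠ u → 4 ≠ v → ∀ s t : K,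
        s • p u + t • p v = p 4 → False := by
      intro u v huv h4u h4v s t hcomb
      by_cases hs : s = 0
      · rw [hs, zero_smul, zero_add] at hcomb
        exact hdist 4 v h4v ⟨t, hcomb.symm⟩
      · by_cases ht : t = 0
        · rw [ht, zero_smul, add_zero] at hcomb
          exact hdist 4 u h4u ⟨s, hcomb.symm⟩
        · exact line_case hhom S hS (hpair u v huv) (hF0 u) (hFD u) (hF0 v) (hFD v) hs ht
            (fun i => by rw [hcomb]; exact hFD 4 i)
    by_cases h1 : y 1 = 0 <;> by_cases h2 : y 2 = 0 <;> by_cases h3 : y 3 = 0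
    · -- y1 = y2 = y3 = 0 : p 4 proportional to p 3
      rw [h1, h2, h3, zero_smul, zero_smul, zero_smul, add_zero, add_zero, add_zero] at hyrep
      exact hdist 4 3 (by decide) ⟨y 0, hyrep.symm⟩
    · -- y1 = y2 = 0 : p 4 in span of p 3, p 2
      rw [h1, h2, zero_smul, zero_smul, add_zero, add_zero] at hyrep
      exact pairzero 3 2 (by decide) (by decide) (by decide) (y 0) (y 3) hyrep
    · -- y1 = y3 = 0 : span of p 3, p 1
      rw [h1, h3, zero_smul, zero_smul, add_zero, add_zero] at hyrep
      exact pairzero 3 1 (by decide) (by decide) (by decide) (y 0) (y 2) hyrep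
    · -- y1 = 0, y2 ≠ 0, y3 ≠ 0 : main core
      exact main_core hG3 hGirr hkill y hyG hyD (Or.inr (Or.inl ⟨h1, h2, h3⟩))
    · -- y2 = y3 = 0 : span of p 3, p 0
      rw [h2, h3, zero_smul, zero_smul, add_zero, add_zero] at hyrep
      exact pairzero 3 0 (by decide) (by decide) (by decide) (y 0) (y 1) hyrep
    · -- y2 = 0, y1 ≠ 0, y3 ≠ 0
      exact main_core hG3 hGirr hkill y hyG hyD (Or.inr (Or.inr (Or.inl ⟨h2, h1, h3⟩)))
    · -- y3 = 0, y1 ≠ 0, y2 ≠ 0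
      exact main_core hG3 hGirr hkill y hyG hyD (Or.inr (Or.inr (Or.inr ⟨h3, h1, h2⟩)))
    · -- all nonzero
      exact main_core hG3 hGirr hkill y hyG hyD (Or.inl ⟨h1, h2, h3⟩)
end

section
/- In the Kummer–Enriques graph Γ, the maximal number of pairwise non-adjacent vertices is 4: there exists an independent set of size 4 (e.g. {[1,1,1,0],[1,1,0,1],[1,0,1,1],[0,1,1,1]}), and every independent set has size ≤ 4. -/
/-- The 16 vertices of the Kummer–Enriques graph: the orbit of `[0,1,1,1]` in `ℙ³(ℚ)` under
double transpositions and even sign changes, listed by canonical representatives (first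
nonzero coordinate equal to `1`). Edges join orthogonal vectors. -/
def kummerEnriquesVertices : Finset (Fin 4 → ℚ) :=
  ([![0,1,1,1], ![0,1,1,-1], ![0,1,-1,1], ![0,1,-1,-1],
    ![1,0,1,1], ![1,0,1,-1], ![1,0,-1,1], ![1,0,-1,-1],
    ![1,1,0,1], ![1,1,0,-1], ![1,-1,0,1], ![1,-1,0,-1],
    ![1,1,1,0], ![1,1,-1,0], ![1,-1,1,0], ![1,-1,-1,0]] : List (Fin 4 → ℚ)).toFinset

/-- Integer models of the sixteen vertices. -/
def keIntVertices : Finset (Fin 4 → ℤ) :=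
  ([![0,1,1,1], ![0,1,1,-1], ![0,1,-1,1], ![0,1,-1,-1],
    ![1,0,1,1], ![1,0,1,-1], ![1,0,-1,1], ![1,0,-1,-1],
    ![1,1,0,1], ![1,1,0,-1], ![1,-1,0,1], ![1,-1,0,-1],
    ![1,1,1,0], ![1,1,-1,0], ![1,-1,1,0], ![1,-1,-1,0]] : List (Fin 4 → ℤ)).toFinset

/-- Integer dot product, written out. -/
def keDot (v w : Fin 4 → ℤ) : ℤ := v 0 * w 0 + v 1 * w 1 + v 2 * w 2 + v 3 * w 3

/-- Coordinatewise cast from integer vectors to rational vectors. -/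
def keEmb (v : Fin 4 → ℤ) : Fin 4 → ℚ := fun i => (v i : ℚ)

lemma keEmb_apply (a b c d : ℤ) :
    keEmb ![a,b,c,d] = ![(a:ℚ),(b:ℚ),(c:ℚ),(d:ℚ)] := by
  funext i; fin_cases i <;> simp [keEmb]

lemma keEmb_inj {v w : Fin 4 → ℤ} (h : keEmb v = keEmb w) : v = w := by
  funext i
  have := congrFun h i
  simpa [keEmb] using this

/-- Every rational vertex is the cast of an integer vertex. -/
lemma ke_mem_lift : ∀ v ∈ kummerEnriquesVertices, ∃ v' ∈ keIntVertices, v = keEmb v' := by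
  intro v hv
  simp only [kummerEnriquesVertices, List.mem_toFinset, List.mem_cons, List.not_mem_nil,
    or_false] at hv
  rcases hv with h|h|h|h|h|h|h|h|h|h|h|h|h|h|h|h <;> subst h <;>
    [ exact ⟨![0,1,1,1], by decide, by rw [keEmb_apply]; norm_num⟩;
      exact ⟨![0,1,1,-1], by decide, by rw [keEmb_apply]; norm_num⟩;
      exact ⟨![0,1,-1,1], by decide, by rw [keEmb_apply]; norm_num⟩;
      exact ⟨![0,1,-1,-1], by decide, by rw [keEmb_apply]; norm_num⟩;
      exact ⟨![1,0,1,1], by decide, by rw [keEmb_apply]; norm_num⟩;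
      exact ⟨![1,0,1,-1], by decide, by rw [keEmb_apply]; norm_num⟩;
      exact ⟨![1,0,-1,1], by decide, by rw [keEmb_apply]; norm_num⟩;
      exact ⟨![1,0,-1,-1], by decide, by rw [keEmb_apply]; norm_num⟩;
      exact ⟨![1,1,0,1], by decide, by rw [keEmb_apply]; norm_num⟩;
      exact ⟨![1,1,0,-1], by decide, by rw [keEmb_apply]; norm_num⟩;
      exact ⟨![1,-1,0,1], by decide, by rw [keEmb_apply]; norm_num⟩;
      exact ⟨![1,-1,0,-1], by decide, by rw [keEmb_apply]; norm_num⟩;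
      exact ⟨![1,1,1,0], by decide, by rw [keEmb_apply]; norm_num⟩;
      exact ⟨![1,1,-1,0], by decide, by rw [keEmb_apply]; norm_num⟩;
      exact ⟨![1,-1,1,0], by decide, by rw [keEmb_apply]; norm_num⟩;
      exact ⟨![1,-1,-1,0], by decide, by rw [keEmb_apply]; norm_num⟩ ]

lemma keDot_cast (v w : Fin 4 → ℤ) :
    (∑ i, keEmb v i * keEmb w i) = ((keDot v w : ℤ) : ℚ) := by
  simp [Fin.sum_univ_four, keEmb, keDot]

set_option maxRecDepth 20000 in
set_option maxHeartbeats 4000000 in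
/-- No five distinct vertices are pairwise non-orthogonal (kernel computation). -/
lemma keFive : ∀ a ∈ keIntVertices, ∀ b ∈ keIntVertices,
    keDot a b = 0 ∨ a = b ∨ ∀ c ∈ keIntVertices,
    keDot a c = 0 ∨ keDot b c = 0 ∨ a = c ∨ b = c ∨ ∀ d ∈ keIntVertices,
    keDot a d = 0 ∨ keDot b d = 0 ∨ keDot c d = 0 ∨ a = d ∨ b = d ∨ c = d ∨
    ∀ e ∈ keIntVertices,
    keDot a e = 0 ∨ keDot b e = 0 ∨ keDot c e = 0 ∨ keDot d e = 0 ∨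
    a = e ∨ b = e ∨ c = e ∨ d = e := by decide

/-- In the Kummer–Enriques graph, the maximal number of pairwise non-adjacent vertices is 4:
the set `{[1,1,1,0],[1,1,0,1],[1,0,1,1],[0,1,1,1]}` is an independent set of size 4, and
every independent set has at most 4 elements. -/
theorem kummerEnriquesGraph_independence_number_four :
    (∃ S : Finset (Fin 4 → ℚ), S ⊆ kummerEnriquesVertices ∧ S.card = 4 ∧
      S = ([![1,1,1,0], ![1,1,0,1], ![1,0,1,1], ![0,1,1,1]] : List (Fin 4 → ℚ)).toFinset ∧
      ∀ v ∈ S, ∀ w ∈ S, (∑ i, v i * w i) ≠ 0) ∧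
    ∀ S : Finset (Fin 4 → ℚ), S ⊆ kummerEnriquesVertices →
      (∀ v ∈ S, ∀ w ∈ S, (∑ i, v i * w i) ≠ 0) → S.card ≤ 4 := by
  constructor
  · refine ⟨([![1,1,1,0], ![1,1,0,1], ![1,0,1,1], ![0,1,1,1]] : List (Fin 4 → ℚ)).toFinset,
      ?_, ?_, rfl, ?_⟩
    · intro v hv
      simp only [List.mem_toFinset, List.mem_cons, List.not_mem_nil, or_false] at hv
      simp only [kummerEnriquesVertices, List.mem_toFinset, List.mem_cons]
      tauto
    · rfl
    · intro v hv w hw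
      simp only [List.mem_toFinset, List.mem_cons, List.not_mem_nil, or_false] at hv hw
      rcases hv with h|h|h|h <;> subst h <;> rcases hw with h|h|h|h <;> subst h <;>
        norm_num [Fin.sum_univ_four, Matrix.cons_val_two, Matrix.cons_val_three]
  · intro S hSV hind
    by_contra hc
    push_neg at hc
    -- extract five distinct elements of S
    have h5 : 5 ≤ S.card := hc
    obtain ⟨a, ha⟩ := Finset.card_pos.mp (show 0 < S.card by omega)
    have h4 : 4 ≤ (S.erase a).card := by
      have := Finset.card_erase_of_mem ha; omega
    obtain ⟨b, hb⟩ := Finset.card_pos.mp (show 0 < (S.erase a).card by omega)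
    have h3 : 3 ≤ ((S.erase a).erase b).card := by
      have := Finset.card_erase_of_mem hb; omega
    obtain ⟨c, hcm⟩ := Finset.card_pos.mp (show 0 < ((S.erase a).erase b).card by omega)
    have h2 : 2 ≤ (((S.erase a).erase b).erase c).card := by
      have := Finset.card_erase_of_mem hcm; omega
    obtain ⟨d, hd⟩ := Finset.card_pos.mp (show 0 < (((S.erase a).erase b).erase c).card by omega)
    have h1 : 1 ≤ ((((S.erase a).erase b).erase c).erase d).card := by
      have := Finset.card_erase_of_mem hd; omega
    obtain ⟨e, he⟩ := Finset.card_pos.mp (show 0 < ((((S.erase a).erase b).erase c).erase d).card by omega)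
    -- memberships and distinctness
    have hbS : b ∈ S := Finset.mem_of_mem_erase hb
    have hcS : c ∈ S := Finset.mem_of_mem_erase (Finset.mem_of_mem_erase hcm)
    have hdS : d ∈ S := Finset.mem_of_mem_erase (Finset.mem_of_mem_erase
      (Finset.mem_of_mem_erase hd))
    have heS : e ∈ S := Finset.mem_of_mem_erase (Finset.mem_of_mem_erase
      (Finset.mem_of_mem_erase (Finset.mem_of_mem_erase he)))
    have hab : b ≠ a := Finset.ne_of_mem_erase hb
    have hac : c ≠ a := Finset.ne_of_mem_erase (Finset.mem_of_mem_erase hcm)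
    have hbc : c ≠ b := Finset.ne_of_mem_erase hcm
    have had : d ≠ a := Finset.ne_of_mem_erase (Finset.mem_of_mem_erase
      (Finset.mem_of_mem_erase hd))
    have hbd : d ≠ b := Finset.ne_of_mem_erase (Finset.mem_of_mem_erase hd)
    have hcd : d ≠ c := Finset.ne_of_mem_erase hd
    have hae : e ≠ a := Finset.ne_of_mem_erase (Finset.mem_of_mem_erase
      (Finset.mem_of_mem_erase (Finset.mem_of_mem_erase he)))
    have hbe : e ≠ b := Finset.ne_of_mem_erase (Finset.mem_of_mem_erase
      (Finset.mem_of_mem_erase he))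
    have hce : e ≠ c := Finset.ne_of_mem_erase (Finset.mem_of_mem_erase he)
    have hde : e ≠ d := Finset.ne_of_mem_erase he
    -- lift to integer vertices
    obtain ⟨a', ha', haeq⟩ := ke_mem_lift a (hSV ha)
    obtain ⟨b', hb', hbeq⟩ := ke_mem_lift b (hSV hbS)
    obtain ⟨c', hc', hceq⟩ := ke_mem_lift c (hSV hcS)
    obtain ⟨d', hd', hdeq⟩ := ke_mem_lift d (hSV hdS)
    obtain ⟨e', he', heeq⟩ := ke_mem_lift e (hSV heS)
    have dot0 : ∀ {u v : Fin 4 → ℤ}, u ∈ keIntVertices → v ∈ keIntVertices →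
        ∀ {x y : Fin 4 → ℚ}, x ∈ S → y ∈ S → x = keEmb u → y = keEmb v →
        keDot u v ≠ 0 := by
      intro u v _ _ x y hx hy hxu hyv h0
      apply hind x hx y hy
      rw [hxu, hyv, keDot_cast, h0]
      norm_num
    have neq : ∀ {u v : Fin 4 → ℤ}, ∀ {x y : Fin 4 → ℚ}, x = keEmb u → y = keEmb v →
        x ≠ y → u ≠ v := by
      intro u v x y hxu hyv hxy huv
      exact hxy (by rw [hxu, hyv, huv])
    have := keFive a' ha' b' hb'
    rcases this with h | h | h
    · exact dot0 ha' hb' ha hbS haeq hbeq h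
    · exact neq haeq hbeq (Ne.symm hab) h
    rcases h c' hc' with h | h | h | h | h
    · exact dot0 ha' hc' ha hcS haeq hceq h
    · exact dot0 hb' hc' hbS hcS hbeq hceq h
    · exact neq haeq hceq (Ne.symm hac) h
    · exact neq hbeq hceq (Ne.symm hbc) h
    rcases h d' hd' with h | h | h | h | h | h | h
    · exact dot0 ha' hd' ha hdS haeq hdeq h
    · exact dot0 hb' hd' hbS hdS hbeq hdeq h
    · exact dot0 hc' hd' hcS hdS hceq hdeq h
    · exact neq haeq hdeq (Ne.symm had) h
    · exact neq hbeq hdeq (Ne.symm hbd) h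
    · exact neq hceq hdeq (Ne.symm hcd) h
    rcases h e' he' with h | h | h | h | h | h | h | h
    · exact dot0 ha' he' ha heS haeq heeq h
    · exact dot0 hb' he' hbS heS hbeq heeq h
    · exact dot0 hc' he' hcS heS hceq heeq h
    · exact dot0 hd' he' hdS heS hdeq heeq h
    · exact neq haeq heeq (Ne.symm hae) h
    · exact neq hbeq heeq (Ne.symm hbe) h
    · exact neq hceq heeq (Ne.symm hce) h
    · exact neq hdeq heeq (Ne.symm hde) h
end
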